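/- arXiv:0904.3207 — 5 statements merged into one kernel-verified Lean document; each statement's English description precedes it below -/
import Mathlib

section
/- Lemma 1 (one-point moment estimate). For β > 0 and p ∈ [p₀, q), set γ(β,p) = I_W + 4(p−r)(J_W/(2p))^{p/(p−r)} (r/β)^{r/(p−r)}, Γ_{xy}(β,p) = γ(β,p)[n(x)n(y)]^{r/(p−r)}, and C(β,λ,p) = c_V + log ∫_ℝ exp((λ+β)|u|^p − a_V|u|^q) du − log ∫_ℝ exp(−β|u|^p − V(u)) du. Then for every λ > 0, β > 0, p ∈ [p₀, q), every vertex x ∈ V, and every ξ ∈ Ω, one has ∫_Ω exp(λ|ω(x)|^p) π_{{x}}(dω|ξ) ≤ exp( C(β,λ,p) + Σ_{y∼x} 2β|ξ(y)|^p/(n(x)n(y)) + Σ_{y∼x} Γ_{xy}(β,p) ), where π_{{x}} is the one-point specification kernel. -/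
open MeasureTheory Real Filter

noncomputable section

variable {V : Type} [Countable V] [DecidableEq V]

/-- The configuration equal to `σ` on `Λ` and to `ξ` off `Λ`. -/
def comb (Λ : Finset V) (σ : ↥Λ → ℝ) (ξ : V → ℝ) : V → ℝ :=
  fun x => if h : x ∈ Λ then σ ⟨x, h⟩ else ξ x

/-- The relative local Hamiltonian `H_Λ(·|ξ)`, evaluated at the full configuration
`ω = ω_Λ × ξ_{Λᶜ}`: the sum of `W(ω(x),ω(y))` over edges with both ends in `Λ`,
plus the sum of `W(ω(x),ω(y))` over edges with `x ∈ Λ`, `y ∉ Λ`, plus `Σ_{x∈Λ} V(ω(x))`. -/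
def ham (G : SimpleGraph V) [∀ v : V, Fintype (G.neighborSet v)]
    (W : ℝ → ℝ → ℝ) (P : ℝ → ℝ) (Λ : Finset V) (ω : V → ℝ) : ℝ :=
  (∑ x ∈ Λ, ∑ y ∈ G.neighborFinset x ∩ Λ, W (ω x) (ω y)) / 2
    + ∑ x ∈ Λ, ∑ y ∈ G.neighborFinset x \ Λ, W (ω x) (ω y)
    + ∑ x ∈ Λ, P (ω x)

/-- The normalizing constant `Z_Λ(ξ)`. -/
def partZ (G : SimpleGraph V) [∀ v : V, Fintype (G.neighborSet v)]
    (W : ℝ → ℝ → ℝ) (P : ℝ → ℝ) (Λ : Finset V) (ξ : V → ℝ) : ℝ :=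
  ∫ σ : ↥Λ → ℝ, Real.exp (- ham G W P Λ (comb Λ σ ξ))

/-- The local Gibbs specification kernel `π_Λ(·|ξ)`, a measure on `Ω = ℝ^V`. -/
def gibbsKer (G : SimpleGraph V) [∀ v : V, Fintype (G.neighborSet v)]
    (W : ℝ → ℝ → ℝ) (P : ℝ → ℝ) (Λ : Finset V) (ξ : V → ℝ) : Measure (V → ℝ) :=
  (ENNReal.ofReal (partZ G W P Λ ξ))⁻¹ •
    Measure.map (fun σ => comb Λ σ ξ)
      ((volume : Measure (↥Λ → ℝ)).withDensity
        fun σ => ENNReal.ofReal (Real.exp (- ham G W P Λ (comb Λ σ ξ))))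

/-- `μ` is a Gibbs measure: a probability measure solving the DLR equation. -/
def IsGibbsMeasure (G : SimpleGraph V) [∀ v : V, Fintype (G.neighborSet v)]
    (W : ℝ → ℝ → ℝ) (P : ℝ → ℝ) (μ : Measure (V → ℝ)) : Prop :=
  IsProbabilityMeasure μ ∧
    ∀ (Λ : Finset V) (A : Set (V → ℝ)), MeasurableSet A →
      μ A = ∫⁻ ω, gibbsKer G W P Λ ω A ∂μ

/-- The weight `w_α(x) = exp(-α ρ(o,x))`. -/
def wgt (G : SimpleGraph V) (o : V) (α : ℝ) (x : V) : ℝ :=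
  Real.exp (-α * (G.dist o x : ℝ))

/-- `‖ω‖_{p,α}^p = Σ_{x∈V} |ω(x)|^p w_α(x)`. -/
def sNorm (G : SimpleGraph V) (o : V) (p α : ℝ) (ω : V → ℝ) : ℝ :=
  ∑' x : V, |ω x| ^ p * wgt G o α x

/-- The set `L^p(V, w_α)` of tempered configurations. -/
def tempered (G : SimpleGraph V) (o : V) (p α : ℝ) : Set (V → ℝ) :=
  {ω | Summable fun x : V => |ω x| ^ p * wgt G o α x}

/-- The summability `Θ(α,θ) = Σ_x Σ_{y∼x} [n(x)n(y)]^θ w_α(x) < ∞`. -/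
def ThetaFin (G : SimpleGraph V) [∀ v : V, Fintype (G.neighborSet v)]
    (o : V) (α θ : ℝ) : Prop :=
  Summable fun x : V =>
    (∑ y ∈ G.neighborFinset x, ((G.degree x : ℝ) * (G.degree y : ℝ)) ^ θ) * wgt G o α x

/-- Young-type inequality with explicit constant. -/
lemma myYoung {r p : ℝ} (hr : 0 < r) (hrp : r < p) {c η : ℝ} (hc : 0 ≤ c) (hη : 0 < η)
    {t : ℝ} (ht : 0 ≤ t) :
    c * t ^ r ≤ η * t ^ p + (p - r) * (c / p) ^ (p / (p - r)) * (r / η) ^ (r / (p - r)) := by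
  have hp : 0 < p := hr.trans hrp
  have hpr : 0 < p - r := by linarith
  have hbase : (0:ℝ) < η * p / r := by positivity
  set X : ℝ := (η * p / r) ^ (r / p) with hXdef
  have hX : 0 < X := rpow_pos_of_pos hbase _
  have hconj : (p / r).HolderConjugate (p / (p - r)) := by
    rw [Real.holderConjugate_iff_eq_conjExponent ((one_lt_div hr).mpr hrp)]
    field_simp
  have key := Real.young_inequality_of_nonneg
    (mul_nonneg hX.le (rpow_nonneg ht r)) (div_nonneg hc hX.le) hconj
  have hab : X * t ^ r * (c / X) = c * t ^ r := by field_simp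
  have hXpow : X ^ (p / r) = η * p / r := by
    rw [hXdef, ← Real.rpow_mul hbase.le, show r / p * (p / r) = 1 by field_simp, rpow_one]
  have htpow : (t ^ r) ^ (p / r) = t ^ p := by
    rw [← Real.rpow_mul ht, show r * (p / r) = p by field_simp]
  have hterm1 : (X * t ^ r) ^ (p / r) / (p / r) = η * t ^ p := by
    rw [mul_rpow hX.le (rpow_nonneg ht r), hXpow, htpow]
    field_simp
  have hXpow2 : X ^ (p / (p - r)) = (η * p / r) ^ (r / (p - r)) := by
    rw [hXdef, ← Real.rpow_mul hbase.le, show r / p * (p / (p - r)) = r / (p - r) by field_simp]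
  have hterm2 : (c / X) ^ (p / (p - r)) / (p / (p - r)) =
      (p - r) * (c / p) ^ (p / (p - r)) * (r / η) ^ (r / (p - r)) := by
    have hppow : p ^ (p / (p - r)) = p ^ (r / (p - r)) * p := by
      rw [show p / (p - r) = r / (p - r) + 1 by field_simp; ring, rpow_add hp, rpow_one]
    rw [div_rpow hc hX.le, hXpow2, div_rpow hc hp.le,
      div_rpow (by positivity : (0:ℝ) ≤ η * p) hr.le,
      mul_rpow hη.le hp.le, div_rpow hr.le hη.le, hppow]
    have h1 : (0:ℝ) < η ^ (r / (p - r)) := rpow_pos_of_pos hη _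
    have h2 : (0:ℝ) < p ^ (r / (p - r)) := rpow_pos_of_pos hp _
    have h3 : (0:ℝ) < r ^ (r / (p - r)) := rpow_pos_of_pos hr _
    field_simp
  calc c * t ^ r = X * t ^ r * (c / X) := hab.symm
    _ ≤ _ := key
    _ = _ := by rw [hterm1, hterm2]

lemma intOn_exp_neg_mul_rpow {b p : ℝ} (hb : 0 < b) (hp : 0 < p) :
    IntegrableOn (fun x : ℝ => Real.exp (-(b * x ^ p))) (Set.Ioi 0) := by
  have h0 : IntegrableOn (fun y : ℝ => Real.exp (-y) * y ^ (1 / p - 1)) (Set.Ioi 0) := by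
    simpa using Real.GammaIntegral_convergent (by positivity : (0:ℝ) < 1 / p)
  have h1 : IntegrableOn (fun y : ℝ => Real.exp (-(b * y)) * (b * y) ^ (1 / p - 1))
      (Set.Ioi 0) := by
    have := (integrableOn_Ioi_comp_mul_left_iff
      (fun y : ℝ => Real.exp (-y) * y ^ (1 / p - 1)) 0 hb).mpr (by simpa using h0)
    simpa using this
  have h2 : IntegrableOn (fun y : ℝ => Real.exp (-(b * y)) * y ^ (1 / p - 1)) (Set.Ioi 0) := by
    have hbp : (0:ℝ) < b ^ (1 / p - 1) := rpow_pos_of_pos hb _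
    have h1' : IntegrableOn
        (fun y : ℝ => (b ^ (1 / p - 1))⁻¹ * (Real.exp (-(b * y)) * (b * y) ^ (1 / p - 1)))
        (Set.Ioi 0) := h1.const_mul _
    refine h1'.congr_fun (fun y hy => ?_) measurableSet_Ioi
    dsimp only
    rw [mul_rpow hb.le (le_of_lt hy)]
    field_simp
  have h3 := (integrableOn_Ioi_comp_rpow_iff'
    (fun y : ℝ => Real.exp (-(b * y)) * y ^ (1 / p - 1)) (ne_of_gt hp)).mpr h2
  refine h3.congr_fun (fun x hx => ?_) measurableSet_Ioi
  have hx0 : (0:ℝ) < x := hx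
  dsimp only
  rw [smul_eq_mul, ← Real.rpow_mul hx0.le, show p * (1 / p - 1) = 1 - p by field_simp]
  rw [show x ^ (p-1) * (Real.exp (-(b * x ^ p)) * x ^ (1-p))
      = Real.exp (-(b * x ^ p)) * (x ^ (p-1) * x ^ (1-p)) by ring,
    ← Real.rpow_add hx0, show p - 1 + (1 - p) = 0 by ring, rpow_zero, mul_one]

lemma int_exp_neg_mul_rpow_abs {b p : ℝ} (hb : 0 < b) (hp : 0 < p) :
    Integrable (fun x : ℝ => Real.exp (-(b * |x| ^ p))) := by
  have base := intOn_exp_neg_mul_rpow hb hp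
  rw [← integrableOn_univ, ← Set.Iic_union_Ioi (a := (0:ℝ)), integrableOn_union]
  constructor
  · rw [← Measure.map_neg_eq_self (volume : Measure ℝ)]
    have m : MeasurableEmbedding fun x : ℝ => -x := (Homeomorph.neg ℝ).measurableEmbedding
    rw [m.integrableOn_map_iff]
    simp only [Function.comp_def, abs_neg, Set.neg_preimage, Set.neg_Iic, neg_zero]
    rw [integrableOn_Ici_iff_integrableOn_Ioi]
    refine base.congr_fun (fun x hx => ?_) measurableSet_Ioi
    rw [abs_of_pos hx]
  · refine base.congr_fun (fun x hx => ?_) measurableSet_Ioi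
    rw [abs_of_pos hx]

lemma cont_exp_poly {b a p q : ℝ} (hp : 0 ≤ p) (hq : 0 ≤ q) :
    Continuous fun t : ℝ => Real.exp (b * |t| ^ p - a * |t| ^ q) := by
  have h1 : Continuous fun t : ℝ => |t| ^ p :=
    continuous_abs.rpow_const (fun x => Or.inr hp)
  have h2 : Continuous fun t : ℝ => |t| ^ q :=
    continuous_abs.rpow_const (fun x => Or.inr hq)
  exact (((continuous_const.mul h1).sub (continuous_const.mul h2))).rexp

lemma int_exp_poly {a b p q : ℝ} (ha : 0 < a) (hp : 0 < p) (hpq : p < q) :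
    Integrable fun t : ℝ => Real.exp (b * |t| ^ p - a * |t| ^ q) := by
  set D : ℝ := (q - p) * (|b| / q) ^ (q / (q - p)) * (p / (a/2)) ^ (p / (q - p)) with hD
  have hdom : ∀ t : ℝ, b * |t| ^ p - a * |t| ^ q ≤ D - a/2 * |t| ^ q := by
    intro t
    have h1 : b * |t| ^ p ≤ |b| * |t| ^ p :=
      mul_le_mul_of_nonneg_right (le_abs_self b) (rpow_nonneg (abs_nonneg t) p)
    have h2 := myYoung hp hpq (abs_nonneg b) (by positivity : (0:ℝ) < a/2) (abs_nonneg t)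
    nlinarith [rpow_nonneg (abs_nonneg t) q]
  have hg : Integrable fun t : ℝ => Real.exp D * Real.exp (-(a/2 * |t| ^ q)) :=
    (int_exp_neg_mul_rpow_abs (by positivity) (hp.trans hpq)).const_mul _
  refine hg.mono' (cont_exp_poly hp.le (hp.trans hpq).le).aestronglyMeasurable
    (Filter.Eventually.of_forall fun t => ?_)
  rw [norm_eq_abs, abs_exp, ← Real.exp_add]
  exact exp_le_exp.mpr (by linarith [hdom t])
set_option maxHeartbeats 1000000 in
/-- **Lemma 1 (one-point moment estimate).** For `β > 0`, `p ∈ [p₀,q)`, `λ > 0`,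
`x ∈ V` and `ξ ∈ Ω`:
`∫ exp(λ|ω(x)|^p) π_{{x}}(dω|ξ) ≤ exp( C(β,λ,p) + Σ_{y∼x} 2β|ξ(y)|^p/(n(x)n(y))
  + Σ_{y∼x} Γ_{xy}(β,p) )`,
where `γ(β,p) = I_W + 4(p-r)(J_W/2p)^{p/(p-r)}(r/β)^{r/(p-r)}`,
`Γ_{xy}(β,p) = γ(β,p)[n(x)n(y)]^{r/(p-r)}`, and
`C(β,λ,p) = c_V + log ∫ exp((λ+β)|u|^p - a_V|u|^q) du - log ∫ exp(-β|u|^p - V(u)) du`. -/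
theorem one_point_moment_estimate
    (G : SimpleGraph V) [∀ v : V, Fintype (G.neighborSet v)] (hconn : G.Connected)
    (θ : ℝ) (hθ : 0 < θ)
    (W : ℝ → ℝ → ℝ) (hWcont : Continuous (Function.uncurry W))
    (hWsym : ∀ u v : ℝ, W u v = W v u)
    (IW JW r : ℝ) (hIW : 0 < IW) (hJW : 0 < JW) (hr : 0 < r)
    (hW : ∀ u v : ℝ, |W u v| ≤ (IW + JW * (|u| ^ r + |v| ^ r)) / 2)
    (P : ℝ → ℝ) (hPcont : Continuous P)
    (aV cV q : ℝ) (haV : 0 < aV) (hcV : 0 < cV) (hq : r + r / θ < q)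
    (hP : ∀ u : ℝ, aV * |u| ^ q - cV ≤ P u)
    (lam β p : ℝ) (hlam : 0 < lam) (hβ : 0 < β) (hp : p ∈ Set.Ico (r + r / θ) q)
    (x : V) (ξ : V → ℝ) :
    ∫⁻ ω, ENNReal.ofReal (Real.exp (lam * |ω x| ^ p)) ∂(gibbsKer G W P {x} ξ) ≤
      ENNReal.ofReal (Real.exp
        ((cV + Real.log (∫ u : ℝ, Real.exp ((lam + β) * |u| ^ p - aV * |u| ^ q))
            - Real.log (∫ u : ℝ, Real.exp (-β * |u| ^ p - P u)))
          + (∑ y ∈ G.neighborFinset x,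
              2 * β * |ξ y| ^ p / ((G.degree x : ℝ) * (G.degree y : ℝ)))
          + (∑ y ∈ G.neighborFinset x,
              (IW + 4 * (p - r) * (JW / (2 * p)) ^ (p / (p - r)) * (r / β) ^ (r / (p - r)))
                * ((G.degree x : ℝ) * (G.degree y : ℝ)) ^ (r / (p - r))))) := by

  classical
  obtain ⟨hp0, hpq⟩ := hp
  have hrθ : r < r + r / θ := by
    have : 0 < r / θ := by positivity
    linarith
  have hrp : r < p := lt_of_lt_of_le hrθ hp0
  have hppos : 0 < p := hr.trans hrp
  have hq0 : 0 < q := hppos.trans hpq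
  have hpr : 0 < p - r := by linarith
  set e : ℝ := r / (p - r) with he
  have he0 : 0 ≤ e := by positivity
  set N := G.neighborFinset x with hN
  set nx : ℝ := (G.degree x : ℝ) with hnx
  set U : ℝ → ℝ := fun t => (∑ y ∈ N, W t (ξ y)) + P t with hU
  have hUcont : Continuous U := by
    refine Continuous.add ?_ hPcont
    refine continuous_finset_sum _ (fun y _ => ?_)
    exact hWcont.comp (continuous_id.prodMk continuous_const)
  haveI : Unique ↥({x} : Finset V) :=
    ⟨⟨⟨x, Finset.mem_singleton_self x⟩⟩, fun a => Subtype.ext (Finset.mem_singleton.mp a.2)⟩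
  have hham : ∀ σ : ↥({x} : Finset V) → ℝ,
      ham G W P {x} (comb {x} σ ξ) = U (σ default) := by
    intro σ
    have hxmem : x ∈ ({x} : Finset V) := Finset.mem_singleton_self x
    have hcombx : comb {x} σ ξ x = σ default := by
      simp only [comb, dif_pos hxmem]
      exact congrArg σ (Subsingleton.elim _ _)
    have hinter : G.neighborFinset x ∩ ({x} : Finset V) = ∅ := by
      ext z
      simp only [Finset.mem_inter, Finset.mem_singleton, SimpleGraph.mem_neighborFinset,
        Finset.notMem_empty, iff_false]
      rintro ⟨hz, rfl⟩
      exact G.irrefl hz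
    have hdiff : G.neighborFinset x \ ({x} : Finset V) = G.neighborFinset x := by
      ext z
      simp only [Finset.mem_sdiff, Finset.mem_singleton, SimpleGraph.mem_neighborFinset,
        and_iff_left_iff_imp]
      rintro hz rfl
      exact G.irrefl hz
    rw [ham, Finset.sum_singleton, Finset.sum_singleton, Finset.sum_singleton, hinter, hdiff]
    rw [Finset.sum_empty, hcombx]
    show (0:ℝ)/2 + _ + _ = _
    rw [zero_div, zero_add, hU]
    congr 1
    refine Finset.sum_congr rfl (fun y hy => ?_)
    have hyx : y ≠ x := by
      intro h
      exact G.irrefl (h ▸ (SimpleGraph.mem_neighborFinset _ _ _).mp hy)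
    congr 1
    simp [comb, hyx]
  have hcombx' : ∀ σ : ↥({x} : Finset V) → ℝ, comb {x} σ ξ x = σ default := by
    intro σ
    simp only [comb, dif_pos (Finset.mem_singleton_self x)]
    exact congrArg σ (Subsingleton.elim _ _)
  have hZ : partZ G W P {x} ξ = ∫ t : ℝ, Real.exp (-(U t)) := by
    rw [partZ]
    have heq : (fun σ : ↥({x}:Finset V) → ℝ => Real.exp (- ham G W P {x} (comb {x} σ ξ)))
        = fun σ => Real.exp (-(U (σ default))) := funext fun σ => by rw [hham σ]
    rw [heq]
    have h := (volume_preserving_funUnique ↥({x}:Finset V) ℝ).integral_comp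
      (MeasurableEquiv.measurableEmbedding _) (fun t => Real.exp (-(U t)))
    convert h using 2 <;> first | rfl | congr!
  have hmT : Measurable fun σ : ↥({x}:Finset V) → ℝ => comb {x} σ ξ := by
    refine measurable_pi_lambda _ (fun v => ?_)
    unfold comb
    by_cases h : v ∈ ({x}:Finset V)
    · simp only [dif_pos h]; exact measurable_pi_apply _
    · simp only [dif_neg h]; exact measurable_const
  have hmf : Measurable fun ω : V → ℝ => ENNReal.ofReal (Real.exp (lam * |ω x| ^ p)) := by
    have hc : Continuous fun t : ℝ => ENNReal.ofReal (Real.exp (lam * |t| ^ p)) :=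
      ENNReal.continuous_ofReal.comp
        ((continuous_const.mul (continuous_abs.rpow_const (fun _ => Or.inr hppos.le))).rexp)
    exact hc.measurable.comp (measurable_pi_apply x)
  have hLHS : ∫⁻ ω, ENNReal.ofReal (Real.exp (lam * |ω x| ^ p)) ∂(gibbsKer G W P {x} ξ)
      = (ENNReal.ofReal (∫ t : ℝ, Real.exp (-(U t))))⁻¹
        * ∫⁻ t : ℝ, ENNReal.ofReal (Real.exp (lam * |t| ^ p - U t)) := by
    rw [gibbsKer, lintegral_smul_measure, hZ]
    congr 1
    rw [lintegral_map hmf hmT]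
    have hUmeas : Measurable fun σ : ↥({x}:Finset V) → ℝ =>
        ENNReal.ofReal (Real.exp (- ham G W P {x} (comb {x} σ ξ))) := by
      have heq : (fun σ : ↥({x}:Finset V) → ℝ =>
          ENNReal.ofReal (Real.exp (- ham G W P {x} (comb {x} σ ξ))))
          = fun σ => ENNReal.ofReal (Real.exp (-(U (σ default)))) :=
        funext fun σ => by rw [hham σ]
      rw [heq]
      exact (ENNReal.continuous_ofReal.comp hUcont.neg.rexp).measurable.comp
        (measurable_pi_apply _)
    have hg2 : Measurable fun σ : ↥({x}:Finset V) → ℝ =>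
        ENNReal.ofReal (Real.exp (lam * |comb {x} σ ξ x| ^ p)) := hmf.comp hmT
    rw [lintegral_withDensity_eq_lintegral_mul _ hUmeas hg2]
    have heq2 : (fun σ : ↥({x}:Finset V) → ℝ =>
        ((fun σ => ENNReal.ofReal (Real.exp (- ham G W P {x} (comb {x} σ ξ)))) *
         (fun σ => ENNReal.ofReal (Real.exp (lam * |comb {x} σ ξ x| ^ p)))) σ)
        = fun σ => ENNReal.ofReal (Real.exp (lam * |σ default| ^ p - U (σ default))) := by
      funext σ
      simp only [Pi.mul_apply]
      rw [hham σ, hcombx' σ, ← ENNReal.ofReal_mul (exp_nonneg _), ← Real.exp_add]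
      congr 2
      ring
    rw [heq2]
    have h := (volume_preserving_funUnique ↥({x}:Finset V) ℝ).lintegral_comp
      (f := fun t : ℝ => ENNReal.ofReal (Real.exp (lam * |t| ^ p - U t)))
      ((ENNReal.continuous_ofReal.comp
        (((continuous_const.mul (continuous_abs.rpow_const (fun _ => Or.inr hppos.le))).sub
          hUcont).rexp)).measurable)
    convert h using 2 <;> first | rfl | congr!
  -- constants
  set Ky : V → ℝ := fun y =>
    (p - r) * (JW / (2*p)) ^ (p/(p-r)) * (r/β) ^ e * ((nx * (G.degree y : ℝ)) ^ e) with hKy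
  set S : ℝ := ∑ y ∈ N, (β * |ξ y| ^ p / (nx * (G.degree y : ℝ)) + IW/2 + 2 * Ky y) with hS
  have hdeg : ∀ y ∈ N, (1:ℝ) ≤ nx ∧ (1:ℝ) ≤ (G.degree y : ℝ) := by
    intro y hy
    have hadj : G.Adj x y := (SimpleGraph.mem_neighborFinset _ _ _).mp hy
    constructor
    · rw [hnx]
      exact_mod_cast (G.degree_pos_iff_exists_adj x).mpr ⟨y, hadj⟩
    · exact_mod_cast (G.degree_pos_iff_exists_adj y).mpr ⟨x, hadj.symm⟩
  -- the key pointwise bound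
  have hWsum : ∀ t : ℝ, ∑ y ∈ N, |W t (ξ y)| ≤ β * |t| ^ p + S := by
    intro t
    have hterm : ∀ y ∈ N, |W t (ξ y)| ≤ β / (nx * (G.degree y : ℝ)) * |t| ^ p +
        (β * |ξ y| ^ p / (nx * (G.degree y : ℝ)) + IW/2 + 2 * Ky y) := by
      intro y hy
      obtain ⟨h1x, h1y⟩ := hdeg y hy
      set ny : ℝ := (G.degree y : ℝ)
      have hnxny : (0:ℝ) < nx * ny := by nlinarith
      have hη : (0:ℝ) < β / (nx * ny) := by positivity
      have hconst : (p - r) * ((JW/2) / p) ^ (p/(p-r)) * (r / (β / (nx*ny))) ^ e = Ky y := by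
        rw [hKy]
        have h1 : (JW/2) / p = JW / (2*p) := by ring
        have h2 : r / (β / (nx*ny)) = (r/β) * (nx*ny) := by field_simp
        rw [h1, h2, mul_rpow (by positivity) hnxny.le]
        ring
      have hy1 : (JW/2) * |t| ^ r ≤ β / (nx*ny) * |t| ^ p + Ky y := by
        have := myYoung hr hrp (by positivity : (0:ℝ) ≤ JW/2) hη (abs_nonneg t)
        rw [← he] at this
        rw [← hconst]
        linarith
      have hy2 : (JW/2) * |ξ y| ^ r ≤ β * |ξ y| ^ p / (nx*ny) + Ky y := by
        have := myYoung hr hrp (by positivity : (0:ℝ) ≤ JW/2) hη (abs_nonneg (ξ y))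
        rw [← he] at this
        rw [← hconst]
        have hrw : β / (nx*ny) * |ξ y| ^ p = β * |ξ y| ^ p / (nx*ny) := by ring
        linarith [hrw ▸ this]
      have hWb := hW t (ξ y)
      have : (IW + JW * (|t| ^ r + |ξ y| ^ r)) / 2
          = IW/2 + (JW/2) * |t| ^ r + (JW/2) * |ξ y| ^ r := by ring
      rw [this] at hWb
      linarith
    have hsum1 := Finset.sum_le_sum hterm
    have hsplit : ∑ y ∈ N, (β / (nx * (G.degree y : ℝ)) * |t| ^ p +
        (β * |ξ y| ^ p / (nx * (G.degree y : ℝ)) + IW/2 + 2 * Ky y))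
        = (∑ y ∈ N, β / (nx * (G.degree y : ℝ))) * |t| ^ p + S := by
      rw [Finset.sum_add_distrib, Finset.sum_mul, hS]
    have hcoef : (∑ y ∈ N, β / (nx * (G.degree y : ℝ))) ≤ β := by
      rcases Finset.eq_empty_or_nonempty N with hNe | hNe
      · rw [hNe, Finset.sum_empty]; exact hβ.le
      · obtain ⟨y0, hy0⟩ := hNe
        have hx1 : (1:ℝ) ≤ nx := (hdeg y0 hy0).1
        have hx0 : (0:ℝ) < nx := lt_of_lt_of_le zero_lt_one hx1
        calc (∑ y ∈ N, β / (nx * (G.degree y : ℝ))) ≤ ∑ y ∈ N, β / nx := by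
              refine Finset.sum_le_sum (fun y hy => ?_)
              refine div_le_div_of_nonneg_left hβ.le hx0 ?_
              nlinarith [(hdeg y hy).2]
          _ = (N.card : ℝ) * (β / nx) := by
              rw [Finset.sum_const, nsmul_eq_mul]
          _ = β := by
              rw [hN, SimpleGraph.card_neighborFinset_eq_degree, ← hnx]
              field_simp
    calc ∑ y ∈ N, |W t (ξ y)| ≤ _ := hsum1
      _ = (∑ y ∈ N, β / (nx * (G.degree y : ℝ))) * |t| ^ p + S := hsplit
      _ ≤ β * |t| ^ p + S := by
          have := mul_le_mul_of_nonneg_right hcoef (rpow_nonneg (abs_nonneg t) p)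
          linarith
  have habs : ∀ t : ℝ, -(∑ y ∈ N, W t (ξ y)) ≤ ∑ y ∈ N, |W t (ξ y)| := by
    intro t
    rw [← Finset.sum_neg_distrib]
    exact Finset.sum_le_sum (fun y _ => neg_le_abs _)
  have habs' : ∀ t : ℝ, ∑ y ∈ N, W t (ξ y) ≤ ∑ y ∈ N, |W t (ξ y)| :=
    fun t => Finset.sum_le_sum (fun y _ => le_abs_self _)
  have hUB : ∀ t : ℝ, lam * |t| ^ p - U t ≤ (S + cV) + ((lam + β) * |t| ^ p - aV * |t| ^ q) := by
    intro t
    have h1 := hWsum t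
    have h2 := hP t
    have h3 := habs t
    simp only [hU]
    ring_nf
    nlinarith
  have hLB : ∀ t : ℝ, (-S) + (-β * |t| ^ p - P t) ≤ -(U t) := by
    intro t
    have h1 := hWsum t
    have h3 := habs' t
    simp only [hU]
    nlinarith
  -- integrability
  have hIntA : Integrable fun u : ℝ => Real.exp ((lam + β) * |u| ^ p - aV * |u| ^ q) :=
    int_exp_poly haV hppos hpq
  have hIntB : Integrable fun u : ℝ => Real.exp (-β * |u| ^ p - P u) := by
    have hg : Integrable fun u : ℝ => Real.exp cV * Real.exp (-(aV * |u| ^ q)) :=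
      (int_exp_neg_mul_rpow_abs haV hq0).const_mul _
    refine hg.mono' ?_ (Filter.Eventually.of_forall fun u => ?_)
    · exact (((continuous_const.mul
        (continuous_abs.rpow_const (fun _ => Or.inr hppos.le))).sub hPcont).rexp).aestronglyMeasurable
    · rw [norm_eq_abs, abs_exp, ← Real.exp_add]
      refine exp_le_exp.mpr ?_
      have h1 := hP u
      have h2 : (0:ℝ) ≤ β * |u| ^ p := by positivity
      linarith
  have hIntU : Integrable fun t : ℝ => Real.exp (-(U t)) := by
    have hg : Integrable fun t : ℝ => Real.exp (S + cV) * Real.exp (β * |t| ^ p - aV * |t| ^ q) :=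
      (int_exp_poly haV hppos hpq).const_mul _
    refine hg.mono' hUcont.neg.rexp.aestronglyMeasurable
      (Filter.Eventually.of_forall fun t => ?_)
    rw [norm_eq_abs, abs_exp, ← Real.exp_add]
    refine exp_le_exp.mpr ?_
    have h1 := hWsum t
    have h2 := hP t
    have h3 := habs t
    simp only [hU]
    nlinarith
  set Areal : ℝ := ∫ u : ℝ, Real.exp ((lam + β) * |u| ^ p - aV * |u| ^ q) with hAreal
  set Breal : ℝ := ∫ u : ℝ, Real.exp (-β * |u| ^ p - P u) with hBreal
  have hApos : 0 < Areal := by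
    rw [hAreal]
    refine (integral_pos_iff_support_of_nonneg (fun u => (exp_pos _).le) hIntA).mpr ?_
    have : Function.support (fun u : ℝ => Real.exp ((lam + β) * |u| ^ p - aV * |u| ^ q))
        = Set.univ := Set.eq_univ_of_forall fun t => (Real.exp_pos _).ne'
    rw [this, Real.volume_univ]
    exact ENNReal.zero_lt_top
  have hBpos : 0 < Breal := by
    rw [hBreal]
    refine (integral_pos_iff_support_of_nonneg (fun u => (exp_pos _).le) hIntB).mpr ?_
    have : Function.support (fun u : ℝ => Real.exp (-β * |u| ^ p - P u))
        = Set.univ := Set.eq_univ_of_forall fun t => (Real.exp_pos _).ne'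
    rw [this, Real.volume_univ]
    exact ENNReal.zero_lt_top
  have hZlb : Real.exp (-S) * Breal ≤ ∫ t : ℝ, Real.exp (-(U t)) := by
    have heq : Real.exp (-S) * Breal = ∫ t : ℝ, Real.exp (-S) * Real.exp (-β * |t| ^ p - P t) :=
      (integral_const_mul _ _).symm
    rw [heq]
    refine integral_mono (hIntB.const_mul _) hIntU (fun t => ?_)
    rw [← Real.exp_add]
    exact exp_le_exp.mpr (hLB t)
  have hNub : (∫⁻ t : ℝ, ENNReal.ofReal (Real.exp (lam * |t| ^ p - U t)))
      ≤ ENNReal.ofReal (Real.exp (S + cV) * Areal) := by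
    have heq : ENNReal.ofReal (Real.exp (S + cV) * Areal)
        = ∫⁻ t : ℝ, ENNReal.ofReal (Real.exp (S + cV)
            * Real.exp ((lam + β) * |t| ^ p - aV * |t| ^ q)) := by
      rw [show Real.exp (S + cV) * Areal
          = ∫ t : ℝ, Real.exp (S + cV) * Real.exp ((lam + β) * |t| ^ p - aV * |t| ^ q) from
          (integral_const_mul _ _).symm]
      exact ofReal_integral_eq_lintegral_ofReal (hIntA.const_mul _)
        (Filter.Eventually.of_forall fun t => by positivity)
    rw [heq]
    refine lintegral_mono (fun t => ENNReal.ofReal_le_ofReal ?_)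
    rw [← Real.exp_add]
    exact exp_le_exp.mpr (hUB t)
  -- combine
  rw [hLHS]
  have hstep : (ENNReal.ofReal (∫ t : ℝ, Real.exp (-(U t))))⁻¹
        * ∫⁻ t : ℝ, ENNReal.ofReal (Real.exp (lam * |t| ^ p - U t))
      ≤ ENNReal.ofReal ((Real.exp (S + cV) * Areal) / (Real.exp (-S) * Breal)) := by
    have h1 : (ENNReal.ofReal (∫ t : ℝ, Real.exp (-(U t))))⁻¹
        ≤ (ENNReal.ofReal (Real.exp (-S) * Breal))⁻¹ :=
      ENNReal.inv_le_inv.mpr (ENNReal.ofReal_le_ofReal hZlb)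
    calc (ENNReal.ofReal (∫ t : ℝ, Real.exp (-(U t))))⁻¹
          * ∫⁻ t : ℝ, ENNReal.ofReal (Real.exp (lam * |t| ^ p - U t))
        ≤ (ENNReal.ofReal (Real.exp (-S) * Breal))⁻¹
          * ENNReal.ofReal (Real.exp (S + cV) * Areal) := mul_le_mul' h1 hNub
      _ = ENNReal.ofReal ((Real.exp (S + cV) * Areal) / (Real.exp (-S) * Breal)) := by
          rw [ENNReal.ofReal_div_of_pos (mul_pos (Real.exp_pos _) hBpos), div_eq_mul_inv, mul_comm]
  refine le_trans hstep (ENNReal.ofReal_le_ofReal ?_)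
  have hval : (Real.exp (S + cV) * Areal) / (Real.exp (-S) * Breal)
      = Real.exp ((cV + Real.log Areal - Real.log Breal) + 2 * S) := by
    have hA : Real.exp (Real.log Areal) = Areal := Real.exp_log hApos
    have hB : Real.exp (Real.log Breal) = Breal := Real.exp_log hBpos
    conv_rhs => rw [show (cV + Real.log Areal - Real.log Breal) + 2 * S
        = ((S + cV) + Real.log Areal) + (S - Real.log Breal) by ring,
      Real.exp_add, Real.exp_add, Real.exp_sub, hA, hB]
    rw [Real.exp_neg]
    have hS0 : Real.exp S ≠ 0 := (Real.exp_pos _).ne'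
    field_simp
  rw [hval]
  refine exp_le_exp.mpr ?_
  have h2S : 2 * S = ∑ y ∈ N, (2 * β * |ξ y| ^ p / (nx * (G.degree y : ℝ)) + (IW + 4 * Ky y)) := by
    rw [hS, Finset.mul_sum]
    refine Finset.sum_congr rfl (fun y _ => ?_)
    ring
  have hsum2 : ∑ y ∈ N, (2 * β * |ξ y| ^ p / (nx * (G.degree y : ℝ)) + (IW + 4 * Ky y))
      ≤ (∑ y ∈ N, 2 * β * |ξ y| ^ p / (nx * (G.degree y : ℝ)))
        + ∑ y ∈ N, (IW + 4 * (p - r) * (JW / (2 * p)) ^ (p / (p - r)) * (r / β) ^ e)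
            * ((nx * (G.degree y : ℝ)) ^ e) := by
    rw [Finset.sum_add_distrib]
    refine add_le_add le_rfl (Finset.sum_le_sum (fun y hy => ?_))
    obtain ⟨h1x, h1y⟩ := hdeg y hy
    have h1 : (1:ℝ) ≤ nx * (G.degree y : ℝ) := by nlinarith
    have h2 : (1:ℝ) ≤ (nx * (G.degree y : ℝ)) ^ e := Real.one_le_rpow h1 he0
    rw [hKy]
    nlinarith [h2, hIW]
  rw [h2S]
  linarith [hsum2]
end
end

section
/- Feller property (Lemma). For every finite set Λ ⊂ V and every bounded continuous function f: Ω → ℝ, the function ξ ↦ π_Λ(f|ξ) = ∫_Ω f(ω) π_Λ(dω|ξ) is again a bounded continuous function on Ω. -/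
open MeasureTheory Real Filter
open scoped NNReal ENNReal

noncomputable section

variable {V : Type} [Countable V] [DecidableEq V]

section Aux

set_option linter.unusedSectionVars false

lemma aux_int {b q : ℝ} (hb : 0 < b) (hq : 0 < q) :
    Integrable fun t : ℝ => Real.exp (-(b * |t| ^ q)) := by
  have hcont : Continuous fun t : ℝ => Real.exp (-(b * |t| ^ q)) := by
    apply Real.continuous_exp.comp
    exact (continuous_const.mul (continuous_abs.rpow_const fun x => Or.inr hq.le)).neg
  set n : ℕ := ⌈2 / q⌉₊ with hn
  have hn2 : 2 ≤ q * n := by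
    have h1 : (2 / q) ≤ (n : ℝ) := Nat.le_ceil _
    calc (2:ℝ) = q * (2 / q) := by field_simp
    _ ≤ q * n := by nlinarith
  have key : ∀ t : ℝ, 1 ≤ t → Real.exp (-(b * |t| ^ q)) ≤ (n.factorial / b ^ n) * t ^ (-(2:ℝ)) := by
    intro t ht
    have ht0 : (0:ℝ) < t := lt_of_lt_of_le one_pos ht
    have habs : |t| = t := abs_of_pos ht0
    have hx0 : 0 ≤ b * t ^ q := mul_nonneg hb.le (rpow_nonneg ht0.le q)
    have hexp : (b * t ^ q) ^ n / (n.factorial : ℝ) ≤ Real.exp (b * t ^ q) := by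
      have := Real.sum_le_exp_of_nonneg hx0 (n+1)
      refine le_trans ?_ this
      rw [Finset.sum_range_succ]
      have : 0 ≤ ∑ i ∈ Finset.range n, (b * t ^ q) ^ i / (i.factorial : ℝ) := by
        apply Finset.sum_nonneg; intro i _
        positivity
      linarith
    have hpow : (b * t ^ q) ^ n = b ^ n * t ^ (q * n) := by
      rw [mul_pow, ← Real.rpow_natCast (t ^ q) n, ← Real.rpow_mul ht0.le]
    have h2 : Real.exp (-(b * |t| ^ q)) = (Real.exp (b * t ^ q))⁻¹ := by
      rw [habs, Real.exp_neg]
    rw [h2]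
    have hfac : (0:ℝ) < n.factorial := by positivity
    have hb' : (0:ℝ) < b ^ n := by positivity
    have hq1 : t ^ (q * (n:ℝ)) ≥ t ^ (2:ℝ) := Real.rpow_le_rpow_of_exponent_le ht hn2
    have ht2 : (0:ℝ) < t ^ (2:ℝ) := Real.rpow_pos_of_pos ht0 _
    have hE : Real.exp (b * t ^ q) ≥ (b ^ n * t ^ (2:ℝ)) / n.factorial := by
      calc (b ^ n * t ^ (2:ℝ)) / n.factorial ≤ (b ^ n * t ^ (q * (n:ℝ))) / n.factorial := by
            gcongr
      _ = (b * t ^ q) ^ n / n.factorial := by rw [hpow]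
      _ ≤ Real.exp (b * t ^ q) := hexp
    have hpos : (0:ℝ) < (b ^ n * t ^ (2:ℝ)) / n.factorial := by positivity
    have := inv_anti₀ hpos hE
    refine this.trans ?_
    rw [Real.rpow_neg ht0.le]
    rw [div_eq_mul_inv, mul_inv, inv_inv]
    rw [mul_inv]
    ring_nf
    apply le_of_eq
    ring
  have hIoi : IntegrableOn (fun t : ℝ => Real.exp (-(b * |t| ^ q))) (Set.Ioi 0) := by
    rw [← Set.Ioc_union_Ioi_eq_Ioi (zero_le_one : (0:ℝ) ≤ 1), integrableOn_union]
    constructor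
    · exact hcont.integrableOn_Ioc
    · apply Integrable.mono' (((integrableOn_Ioi_rpow_of_lt (by norm_num : (-2:ℝ) < -1)
        one_pos)).const_mul ((n.factorial : ℝ) / b ^ n))
      · exact hcont.aestronglyMeasurable.restrict
      · filter_upwards [ae_restrict_mem measurableSet_Ioi] with t ht
        rw [Real.norm_eq_abs, abs_of_pos (Real.exp_pos _)]
        exact key t (le_of_lt ht)
  rw [← integrableOn_univ, ← Set.Iio_union_Ici (a := (0:ℝ)), integrableOn_union,
    integrableOn_Ici_iff_integrableOn_Ioi]
  refine ⟨?_, hIoi⟩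
  rw [← (Measure.measurePreserving_neg (volume : Measure ℝ)).integrableOn_comp_preimage
    (Homeomorph.neg ℝ).measurableEmbedding]
  rw [show (fun x : ℝ => -x) ⁻¹' (Set.Iio (0:ℝ)) = Set.Ioi 0 from by ext x; simp [neg_lt_zero]]
  have heq : ((fun t : ℝ => Real.exp (-(b * |t| ^ q))) ∘ Neg.neg)
      = fun t : ℝ => Real.exp (-(b * |t| ^ q)) := by
    funext t; simp [Function.comp, abs_neg]
  rw [heq]; exact hIoi

lemma aux_rq {c a r q : ℝ} (hc : 0 ≤ c) (ha : 0 < a) (hr : 0 < r) (hq : r < q) :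
    ∃ M : ℝ, 0 ≤ M ∧ ∀ s : ℝ, 0 ≤ s → c * s ^ r ≤ (a / 2) * s ^ q + M := by
  set T : ℝ := max 1 ((2 * c / a) ^ (1 / (q - r))) with hT
  have hT1 : (1:ℝ) ≤ T := le_max_left _ _
  have hT0 : (0:ℝ) < T := lt_of_lt_of_le one_pos hT1
  refine ⟨c * T ^ r, mul_nonneg hc (rpow_nonneg hT0.le r), fun s hs => ?_⟩
  rcases le_or_gt s T with h | h
  · have h1 : c * s ^ r ≤ c * T ^ r :=
      mul_le_mul_of_nonneg_left (Real.rpow_le_rpow hs h hr.le) hc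
    have h2 : 0 ≤ (a / 2) * s ^ q := by positivity
    linarith
  · have hs1 : (1:ℝ) ≤ s := hT1.trans h.le
    have hqr : 0 < q - r := by linarith
    have hkey : c ≤ (a / 2) * s ^ (q - r) := by
      have h2 : (2 * c / a) ^ (1 / (q - r)) ≤ T := le_max_right _ _
      have h3 : (2 * c / a) ≤ T ^ (q - r) := by
        have := Real.rpow_le_rpow (Real.rpow_nonneg (by positivity) _) h2 hqr.le
        rwa [← Real.rpow_mul (by positivity : (0:ℝ) ≤ 2 * c / a),
          one_div_mul_cancel hqr.ne', Real.rpow_one] at this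
      have h4 : T ^ (q - r) ≤ s ^ (q - r) := Real.rpow_le_rpow hT0.le h.le hqr.le
      have : 2 * c / a ≤ s ^ (q - r) := h3.trans h4
      calc c = (a / 2) * (2 * c / a) := by field_simp
      _ ≤ (a / 2) * s ^ (q - r) := by
          exact mul_le_mul_of_nonneg_left this (by positivity)
    have hsr : 0 < s ^ r := Real.rpow_pos_of_pos (by linarith) r
    have : c * s ^ r ≤ (a / 2) * s ^ (q - r) * s ^ r :=
      mul_le_mul_of_nonneg_right hkey hsr.le
    have hsq : s ^ (q - r) * s ^ r = s ^ q := by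
      rw [← Real.rpow_add (by linarith : (0:ℝ) < s)]; ring_nf
    have hM : 0 ≤ c * T ^ r := mul_nonneg hc (rpow_nonneg hT0.le r)
    nlinarith [hsq]

lemma comb_mem {Λ : Finset V} {σ : ↥Λ → ℝ} {ξ : V → ℝ} {x : V} (hx : x ∈ Λ) :
    comb Λ σ ξ x = σ ⟨x, hx⟩ := dif_pos hx

lemma comb_not_mem {Λ : Finset V} {σ : ↥Λ → ℝ} {ξ : V → ℝ} {x : V} (hx : x ∉ Λ) :
    comb Λ σ ξ x = ξ x := dif_neg hx

lemma comb_continuous (Λ : Finset V) :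
    Continuous fun p : (↥Λ → ℝ) × (V → ℝ) => comb Λ p.1 p.2 := by
  apply continuous_pi
  intro x
  by_cases hx : x ∈ Λ
  · have : (fun p : (↥Λ → ℝ) × (V → ℝ) => comb Λ p.1 p.2 x)
        = fun p => p.1 ⟨x, hx⟩ := by funext p; exact comb_mem hx
    rw [this]; exact (continuous_apply _).comp continuous_fst
  · have : (fun p : (↥Λ → ℝ) × (V → ℝ) => comb Λ p.1 p.2 x)
        = fun p => p.2 x := by funext p; exact comb_not_mem hx
    rw [this]; exact (continuous_apply _).comp continuous_snd

lemma ham_continuous (G : SimpleGraph V) [∀ v : V, Fintype (G.neighborSet v)]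
    {W : ℝ → ℝ → ℝ} (hWcont : Continuous (Function.uncurry W))
    {P : ℝ → ℝ} (hPcont : Continuous P) (Λ : Finset V) :
    Continuous (ham G W P Λ) := by
  unfold ham
  have hterm : ∀ x y : V, Continuous fun ω : V → ℝ => W (ω x) (ω y) := by
    intro x y
    have : (fun ω : V → ℝ => W (ω x) (ω y))
        = Function.uncurry W ∘ fun ω : V → ℝ => (ω x, ω y) := rfl
    rw [this]
    exact hWcont.comp ((continuous_apply x).prodMk (continuous_apply y))
  exact (((continuous_finset_sum _ fun x _ => continuous_finset_sum _ fun y _ =>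
      hterm x y).div_const 2).add
    (continuous_finset_sum _ fun x _ => continuous_finset_sum _ fun y _ => hterm x y)).add
    (continuous_finset_sum _ fun x _ => hPcont.comp (continuous_apply x))

set_option maxHeartbeats 1000000 in
lemma neg_ham_le (G : SimpleGraph V) [∀ v : V, Fintype (G.neighborSet v)]
    {W : ℝ → ℝ → ℝ} {IW JW r : ℝ} (hIW : 0 < IW) (hJW : 0 < JW) (hr : 0 < r)
    (hW : ∀ u v : ℝ, |W u v| ≤ (IW + JW * (|u| ^ r + |v| ^ r)) / 2)
    {P : ℝ → ℝ} {aV cV q : ℝ}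
    (hP : ∀ u : ℝ, aV * |u| ^ q - cV ≤ P u)
    (Λ : Finset V) {K : ℝ} (hK : 0 ≤ K)
    (σ : ↥Λ → ℝ) (ξ : V → ℝ)
    (hξ : ∀ x ∈ Λ, ∀ y ∈ G.neighborFinset x \ Λ, |ξ y| ≤ K) :
    - ham G W P Λ (comb Λ σ ξ) ≤
      (∑ x ∈ Λ, (G.degree x : ℝ)) *
          (IW + JW * (2 * (∑ x : ↥Λ, |σ x| ^ r) + K ^ r)) * 2
        + cV * Λ.card - aV * ∑ x : ↥Λ, |σ x| ^ q := by
  set D : ℝ := ∑ x ∈ Λ, (G.degree x : ℝ) with hD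
  set Sr : ℝ := ∑ x : ↥Λ, |σ x| ^ r with hSr
  set Sq : ℝ := ∑ x : ↥Λ, |σ x| ^ q with hSq
  set T : ℝ := IW + JW * (2 * Sr + K ^ r) with hT
  have hSr0 : 0 ≤ Sr := Finset.sum_nonneg fun i _ => Real.rpow_nonneg (abs_nonneg _) r
  have hKr0 : 0 ≤ K ^ r := Real.rpow_nonneg hK r
  have hT0 : 0 ≤ T := by positivity
  have hD0 : 0 ≤ D := Finset.sum_nonneg fun x _ => Nat.cast_nonneg _
  have hsingle : ∀ (x : V) (hx : x ∈ Λ), |σ ⟨x, hx⟩| ^ r ≤ Sr := fun x hx =>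
    Finset.single_le_sum (f := fun i : ↥Λ => |σ i| ^ r)
      (fun i _ => Real.rpow_nonneg (abs_nonneg _) r) (Finset.mem_univ (⟨x, hx⟩ : ↥Λ))
  have hA : |∑ x ∈ Λ, ∑ y ∈ G.neighborFinset x ∩ Λ, W (comb Λ σ ξ x) (comb Λ σ ξ y)| ≤ D * T := by
    calc |∑ x ∈ Λ, ∑ y ∈ G.neighborFinset x ∩ Λ, W (comb Λ σ ξ x) (comb Λ σ ξ y)|
        ≤ ∑ x ∈ Λ, |∑ y ∈ G.neighborFinset x ∩ Λ, W (comb Λ σ ξ x) (comb Λ σ ξ y)| :=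
          Finset.abs_sum_le_sum_abs _ _
      _ ≤ ∑ x ∈ Λ, (G.degree x : ℝ) * T := by
          apply Finset.sum_le_sum
          intro x hx
          calc |∑ y ∈ G.neighborFinset x ∩ Λ, W (comb Λ σ ξ x) (comb Λ σ ξ y)|
              ≤ ∑ y ∈ G.neighborFinset x ∩ Λ, |W (comb Λ σ ξ x) (comb Λ σ ξ y)| :=
                Finset.abs_sum_le_sum_abs _ _
            _ ≤ ∑ y ∈ G.neighborFinset x ∩ Λ, T := by
                apply Finset.sum_le_sum
                intro y hy
                have hyΛ : y ∈ Λ := (Finset.mem_inter.mp hy).2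
                rw [comb_mem hx, comb_mem hyΛ]
                have h1 := hW (σ ⟨x, hx⟩) (σ ⟨y, hyΛ⟩)
                have e1 := hsingle x hx
                have e2 := hsingle y hyΛ
                have p1 : JW * |σ ⟨x, hx⟩| ^ r ≤ JW * Sr := mul_le_mul_of_nonneg_left e1 hJW.le
                have p2 : JW * |σ ⟨y, hyΛ⟩| ^ r ≤ JW * Sr := mul_le_mul_of_nonneg_left e2 hJW.le
                have p3 : 0 ≤ JW * K ^ r := mul_nonneg hJW.le hKr0
                have p4 : 0 ≤ JW * Sr := mul_nonneg hJW.le hSr0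
                rw [hT]
                nlinarith [h1]
            _ = ((G.neighborFinset x ∩ Λ).card : ℝ) * T := by
                rw [Finset.sum_const, nsmul_eq_mul]
            _ ≤ (G.degree x : ℝ) * T := by
                apply mul_le_mul_of_nonneg_right _ hT0
                exact_mod_cast Nat.cast_le.mpr
                  (le_trans (Finset.card_le_card Finset.inter_subset_left)
                    (le_of_eq (G.card_neighborFinset_eq_degree x)))
      _ = D * T := (Finset.sum_mul _ _ _).symm
  have hB : |∑ x ∈ Λ, ∑ y ∈ G.neighborFinset x \ Λ, W (comb Λ σ ξ x) (comb Λ σ ξ y)| ≤ D * T := by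
    calc |∑ x ∈ Λ, ∑ y ∈ G.neighborFinset x \ Λ, W (comb Λ σ ξ x) (comb Λ σ ξ y)|
        ≤ ∑ x ∈ Λ, |∑ y ∈ G.neighborFinset x \ Λ, W (comb Λ σ ξ x) (comb Λ σ ξ y)| :=
          Finset.abs_sum_le_sum_abs _ _
      _ ≤ ∑ x ∈ Λ, (G.degree x : ℝ) * T := by
          apply Finset.sum_le_sum
          intro x hx
          calc |∑ y ∈ G.neighborFinset x \ Λ, W (comb Λ σ ξ x) (comb Λ σ ξ y)|
              ≤ ∑ y ∈ G.neighborFinset x \ Λ, |W (comb Λ σ ξ x) (comb Λ σ ξ y)| :=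
                Finset.abs_sum_le_sum_abs _ _
            _ ≤ ∑ y ∈ G.neighborFinset x \ Λ, T := by
                apply Finset.sum_le_sum
                intro y hy
                have hyΛ : y ∉ Λ := (Finset.mem_sdiff.mp hy).2
                rw [comb_mem hx, comb_not_mem hyΛ]
                have h1 := hW (σ ⟨x, hx⟩) (ξ y)
                have e1 := hsingle x hx
                have e2 : |ξ y| ^ r ≤ K ^ r :=
                  Real.rpow_le_rpow (abs_nonneg _) (hξ x hx y hy) hr.le
                have p1 : JW * |σ ⟨x, hx⟩| ^ r ≤ JW * Sr := mul_le_mul_of_nonneg_left e1 hJW.le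
                have p2 : JW * |ξ y| ^ r ≤ JW * K ^ r := mul_le_mul_of_nonneg_left e2 hJW.le
                have p4 : 0 ≤ JW * Sr := mul_nonneg hJW.le hSr0
                rw [hT]
                nlinarith [h1]
            _ = ((G.neighborFinset x \ Λ).card : ℝ) * T := by
                rw [Finset.sum_const, nsmul_eq_mul]
            _ ≤ (G.degree x : ℝ) * T := by
                apply mul_le_mul_of_nonneg_right _ hT0
                exact_mod_cast Nat.cast_le.mpr
                  (le_trans (Finset.card_le_card (Finset.sdiff_subset))
                    (le_of_eq (G.card_neighborFinset_eq_degree x)))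
      _ = D * T := (Finset.sum_mul _ _ _).symm
  have hsq : ∑ x ∈ Λ, |comb Λ σ ξ x| ^ q = Sq := by
    rw [hSq, ← Finset.sum_coe_sort Λ (fun x => |comb Λ σ ξ x| ^ q)]
    apply Finset.sum_congr rfl
    intro i _
    rw [comb_mem i.2]
  have hC : aV * Sq - cV * Λ.card ≤ ∑ x ∈ Λ, P (comb Λ σ ξ x) := by
    have h1 : ∑ x ∈ Λ, (aV * |comb Λ σ ξ x| ^ q - cV) ≤ ∑ x ∈ Λ, P (comb Λ σ ξ x) :=
      Finset.sum_le_sum fun x _ => hP _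
    calc aV * Sq - cV * Λ.card
        = ∑ x ∈ Λ, (aV * |comb Λ σ ξ x| ^ q - cV) := by
          rw [Finset.sum_sub_distrib, ← Finset.mul_sum, hsq, Finset.sum_const, nsmul_eq_mul]
          ring
      _ ≤ _ := h1
  have hDT : 0 ≤ D * T := mul_nonneg hD0 hT0
  unfold ham
  set A : ℝ := ∑ x ∈ Λ, ∑ y ∈ G.neighborFinset x ∩ Λ, W (comb Λ σ ξ x) (comb Λ σ ξ y) with hA'
  set B : ℝ := ∑ x ∈ Λ, ∑ y ∈ G.neighborFinset x \ Λ, W (comb Λ σ ξ x) (comb Λ σ ξ y) with hB'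
  set C : ℝ := ∑ x ∈ Λ, P (comb Λ σ ξ x) with hC'
  have h1 : -A ≤ |A| := neg_le_abs A
  have h2 : -B ≤ |B| := neg_le_abs B
  set DT : ℝ := D * T with hDT'
  linarith

end Aux

set_option maxHeartbeats 1000000 in
/-- **Feller property (Lemma).** For every finite `Λ ⊂ V` and every bounded continuous
`f : Ω → ℝ`, the function `ξ ↦ π_Λ(f|ξ) = ∫ f dπ_Λ(·|ξ)` is again bounded and continuous. -/
theorem feller_property_of_specification
    (G : SimpleGraph V) [∀ v : V, Fintype (G.neighborSet v)] (hconn : G.Connected)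
    (W : ℝ → ℝ → ℝ) (hWcont : Continuous (Function.uncurry W))
    (hWsym : ∀ u v : ℝ, W u v = W v u)
    (IW JW r : ℝ) (hIW : 0 < IW) (hJW : 0 < JW) (hr : 0 < r)
    (hW : ∀ u v : ℝ, |W u v| ≤ (IW + JW * (|u| ^ r + |v| ^ r)) / 2)
    (P : ℝ → ℝ) (hPcont : Continuous P)
    (aV cV q : ℝ) (haV : 0 < aV) (hcV : 0 < cV) (hq : r < q)
    (hP : ∀ u : ℝ, aV * |u| ^ q - cV ≤ P u)
    (Λ : Finset V) (f : BoundedContinuousFunction (V → ℝ) ℝ) :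
    Continuous (fun ξ : V → ℝ => ∫ ω, f ω ∂(gibbsKer G W P Λ ξ)) ∧
    ∃ M : ℝ, ∀ ξ : V → ℝ, |∫ ω, f ω ∂(gibbsKer G W P Λ ξ)| ≤ M := by
  classical
  have hq0 : 0 < q := hr.trans hq
  set D : ℝ := ∑ x ∈ Λ, (G.degree x : ℝ) with hDdef
  have hD0 : 0 ≤ D := Finset.sum_nonneg fun x _ => Nat.cast_nonneg _
  obtain ⟨M₀, hM₀0, hM₀⟩ := aux_rq (c := 4 * D * JW) (a := aV) (r := r) (q := q)
    (by positivity) haV hr hq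
  -- the per-coordinate integrable function
  set g : ℝ → ℝ := fun t => Real.exp (-(aV / 2 * |t| ^ q)) with hgdef
  have hgint : Integrable g := aux_int (by positivity) hq0
  have hGprod : Integrable (fun σ : ↥Λ → ℝ => ∏ x : ↥Λ, g (σ x)) :=
    Integrable.fintype_prod fun _ => hgint
  -- the constant in the bound
  set CK : ℝ → ℝ := fun K => 2 * D * IW + 2 * D * JW * K ^ r + cV * Λ.card + Λ.card * M₀
    with hCKdef
  -- the boundary
  set bd : Finset V := Λ.biUnion (fun x => G.neighborFinset x \ Λ) with hbddef
  -- key pointwise estimate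
  have key : ∀ (K : ℝ), 0 ≤ K → ∀ (σ : ↥Λ → ℝ) (ξ : V → ℝ),
      (∀ y ∈ bd, |ξ y| ≤ K) →
      Real.exp (- ham G W P Λ (comb Λ σ ξ)) ≤ Real.exp (CK K) * ∏ x : ↥Λ, g (σ x) := by
    intro K hK σ ξ hξK
    have hξ : ∀ x ∈ Λ, ∀ y ∈ G.neighborFinset x \ Λ, |ξ y| ≤ K := by
      intro x hx y hy
      exact hξK y (Finset.mem_biUnion.mpr ⟨x, hx, hy⟩)
    have h1 := neg_ham_le G hIW hJW hr hW hP Λ hK σ ξ hξ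
    have h2 : - ham G W P Λ (comb Λ σ ξ) ≤ CK K - ∑ x : ↥Λ, (aV / 2 * |σ x| ^ q) := by
      have h3 : ∀ x : ↥Λ, (4 * D * JW) * |σ x| ^ r ≤ (aV / 2) * |σ x| ^ q + M₀ :=
        fun x => hM₀ _ (abs_nonneg _)
      have h4 : (4 * D * JW) * (∑ x : ↥Λ, |σ x| ^ r)
          ≤ (aV / 2) * (∑ x : ↥Λ, |σ x| ^ q) + (Fintype.card ↥Λ) * M₀ := by
        calc (4 * D * JW) * (∑ x : ↥Λ, |σ x| ^ r)
            = ∑ x : ↥Λ, (4 * D * JW) * |σ x| ^ r := Finset.mul_sum _ _ _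
          _ ≤ ∑ x : ↥Λ, ((aV / 2) * |σ x| ^ q + M₀) := Finset.sum_le_sum fun x _ => h3 x
          _ = (aV / 2) * (∑ x : ↥Λ, |σ x| ^ q) + (Fintype.card ↥Λ) * M₀ := by
            rw [Finset.sum_add_distrib, ← Finset.mul_sum, Finset.sum_const, nsmul_eq_mul]
            simp [Finset.card_univ]
      have hcard : (Fintype.card ↥Λ : ℝ) = (Λ.card : ℝ) := by
        rw [Fintype.card_coe]
      rw [hcard] at h4
      have hexpand : D * (IW + JW * (2 * (∑ x : ↥Λ, |σ x| ^ r) + K ^ r)) * 2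
          = 2 * D * IW + 2 * D * JW * K ^ r + (4 * D * JW) * (∑ x : ↥Λ, |σ x| ^ r) := by
        ring
      have hsum : ∑ x : ↥Λ, (aV / 2 * |σ x| ^ q) = (aV / 2) * ∑ x : ↥Λ, |σ x| ^ q := by
        rw [Finset.mul_sum]
      rw [hCKdef]
      simp only
      rw [hsum]
      have haVq : aV * ∑ x : ↥Λ, |σ x| ^ q
          = (aV / 2) * (∑ x : ↥Λ, |σ x| ^ q) + (aV / 2) * (∑ x : ↥Λ, |σ x| ^ q) := by ring
      linarith [h1, h4, hexpand]
    calc Real.exp (- ham G W P Λ (comb Λ σ ξ))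
        ≤ Real.exp (CK K - ∑ x : ↥Λ, (aV / 2 * |σ x| ^ q)) := Real.exp_le_exp.mpr h2
      _ = Real.exp (CK K) * ∏ x : ↥Λ, g (σ x) := by
          rw [sub_eq_add_neg, Real.exp_add, ← Finset.sum_neg_distrib, Real.exp_sum]
  -- continuity in σ for fixed ξ
  have hcomb : ∀ ξ : V → ℝ, Continuous fun σ : ↥Λ → ℝ => comb Λ σ ξ := fun ξ =>
    (comb_continuous Λ).comp (continuous_id.prodMk continuous_const)
  have hhamc : Continuous (ham G W P Λ) := ham_continuous G hWcont hPcont Λ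
  have hexpc : ∀ ξ : V → ℝ, Continuous fun σ : ↥Λ → ℝ =>
      Real.exp (- ham G W P Λ (comb Λ σ ξ)) := fun ξ =>
    Real.continuous_exp.comp ((hhamc.comp (hcomb ξ)).neg)
  -- K(ξ) bound for fixed ξ
  have hKξ : ∀ ξ : V → ℝ, ∀ y ∈ bd, |ξ y| ≤ ∑ z ∈ bd, |ξ z| := fun ξ y hy =>
    Finset.single_le_sum (f := fun z => |ξ z|) (fun z _ => abs_nonneg _) hy
  have hKξ0 : ∀ ξ : V → ℝ, 0 ≤ ∑ z ∈ bd, |ξ z| := fun ξ =>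
    Finset.sum_nonneg fun z _ => abs_nonneg _
  -- integrability of exp(-ham) for each ξ
  have hint : ∀ ξ : V → ℝ, Integrable fun σ : ↥Λ → ℝ =>
      Real.exp (- ham G W P Λ (comb Λ σ ξ)) := by
    intro ξ
    apply Integrable.mono' (hGprod.const_mul (Real.exp (CK (∑ z ∈ bd, |ξ z|))))
    · exact (hexpc ξ).aestronglyMeasurable
    · filter_upwards with σ
      rw [Real.norm_eq_abs, abs_of_pos (Real.exp_pos _)]
      exact key _ (hKξ0 ξ) σ ξ (hKξ ξ)
  -- positivity of Z
  have hZpos : ∀ ξ : V → ℝ, 0 < partZ G W P Λ ξ := by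
    intro ξ
    rw [partZ]
    rw [integral_pos_iff_support_of_nonneg (fun σ => (Real.exp_pos _).le) (hint ξ)]
    have hsupp : (Function.support fun σ : ↥Λ → ℝ =>
        Real.exp (- ham G W P Λ (comb Λ σ ξ))) = Set.univ := by
      ext σ; simp [Real.exp_ne_zero]
    rw [hsupp]
    exact isOpen_univ.measure_pos volume Set.univ_nonempty
  -- the numerator
  set N : (V → ℝ) → ℝ := fun ξ =>
    ∫ σ : ↥Λ → ℝ, Real.exp (- ham G W P Λ (comb Λ σ ξ)) * f (comb Λ σ ξ) with hNdef
  -- rewriting the integral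
  have hintf : ∀ ξ : V → ℝ, Integrable fun σ : ↥Λ → ℝ =>
      Real.exp (- ham G W P Λ (comb Λ σ ξ)) * f (comb Λ σ ξ) := by
    intro ξ
    apply Integrable.mono' ((hint ξ).const_mul ‖f‖)
    · exact ((hexpc ξ).mul (f.continuous.comp (hcomb ξ))).aestronglyMeasurable
    · filter_upwards with σ
      rw [Real.norm_eq_abs, abs_mul, abs_of_pos (Real.exp_pos _), mul_comm ‖f‖]
      have : |f (comb Λ σ ξ)| ≤ ‖f‖ := by
        rw [← Real.norm_eq_abs]; exact f.norm_coe_le_norm _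
      exact mul_le_mul_of_nonneg_left this (Real.exp_pos _).le
  have hrw : ∀ ξ : V → ℝ, ∫ ω, f ω ∂(gibbsKer G W P Λ ξ) = (partZ G W P Λ ξ)⁻¹ * N ξ := by
    intro ξ
    rw [gibbsKer, integral_smul_measure]
    rw [integral_map ((hcomb ξ).measurable.aemeasurable) f.continuous.aestronglyMeasurable]
    have hd : (fun σ : ↥Λ → ℝ => ENNReal.ofReal (Real.exp (- ham G W P Λ (comb Λ σ ξ))))
        = fun σ : ↥Λ → ℝ =>
          ((Real.toNNReal (Real.exp (- ham G W P Λ (comb Λ σ ξ))) : ℝ≥0) : ℝ≥0∞) := rfl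
    have hm : Measurable fun σ : ↥Λ → ℝ =>
        Real.toNNReal (Real.exp (- ham G W P Λ (comb Λ σ ξ))) :=
      measurable_real_toNNReal.comp (hexpc ξ).measurable
    rw [hd, integral_withDensity_eq_integral_smul hm (fun σ => f (comb Λ σ ξ))]
    have hi : (fun σ : ↥Λ → ℝ =>
        Real.toNNReal (Real.exp (- ham G W P Λ (comb Λ σ ξ))) • f (comb Λ σ ξ))
        = fun σ : ↥Λ → ℝ => Real.exp (- ham G W P Λ (comb Λ σ ξ)) * f (comb Λ σ ξ) := by
      funext σ
      rw [NNReal.smul_def, Real.coe_toNNReal _ (Real.exp_pos _).le, smul_eq_mul]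
    rw [hi]
    rw [ENNReal.toReal_inv, ENNReal.toReal_ofReal (hZpos ξ).le, smul_eq_mul]
  -- bound on N
  have hNle : ∀ ξ : V → ℝ, |N ξ| ≤ ‖f‖ * partZ G W P Λ ξ := by
    intro ξ
    have h1 : |N ξ| ≤ ∫ σ : ↥Λ → ℝ,
        |Real.exp (- ham G W P Λ (comb Λ σ ξ)) * f (comb Λ σ ξ)| := by
      rw [hNdef]
      simp only [← Real.norm_eq_abs]
      exact norm_integral_le_integral_norm _
    refine h1.trans ?_
    have h2 : ∫ σ : ↥Λ → ℝ,
        |Real.exp (- ham G W P Λ (comb Λ σ ξ)) * f (comb Λ σ ξ)|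
        ≤ ∫ σ : ↥Λ → ℝ, ‖f‖ * Real.exp (- ham G W P Λ (comb Λ σ ξ)) := by
      apply integral_mono (hintf ξ).abs ((hint ξ).const_mul ‖f‖)
      intro σ
      dsimp only
      rw [abs_mul, abs_of_pos (Real.exp_pos _), mul_comm ‖f‖]
      have : |f (comb Λ σ ξ)| ≤ ‖f‖ := by
        rw [← Real.norm_eq_abs]; exact f.norm_coe_le_norm _
      exact mul_le_mul_of_nonneg_left this (Real.exp_pos _).le
    refine h2.trans ?_
    rw [integral_const_mul, partZ]
  constructor
  · -- continuity
    have hZcont : Continuous fun ξ : V → ℝ => partZ G W P Λ ξ := by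
      rw [continuous_iff_continuousAt]
      intro ξ₀
      set K : ℝ := (∑ z ∈ bd, |ξ₀ z|) + 1 with hKdef
      have hK0 : 0 ≤ K := by have := hKξ0 ξ₀; linarith
      have hev : ∀ᶠ ξ : V → ℝ in nhds ξ₀, ∀ y ∈ bd, |ξ y| ≤ K := by
        rw [eventually_all_finset]
        intro y hy
        have ht : Tendsto (fun ξ : V → ℝ => |ξ y|) (nhds ξ₀) (nhds |ξ₀ y|) :=
          ((continuous_abs.comp (continuous_apply y)).tendsto ξ₀)
        have hlt : |ξ₀ y| < K := by
          have := hKξ ξ₀ y hy; rw [hKdef]; linarith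
        exact (ht.eventually_lt_const hlt).mono fun ξ h => h.le
      apply continuousAt_of_dominated (bound := fun σ : ↥Λ → ℝ =>
        Real.exp (CK K) * ∏ x : ↥Λ, g (σ x))
      · filter_upwards with ξ
        exact (hexpc ξ).aestronglyMeasurable
      · filter_upwards [hev] with ξ hξK
        filter_upwards with σ
        rw [Real.norm_eq_abs, abs_of_pos (Real.exp_pos _)]
        exact key K hK0 σ ξ hξK
      · exact hGprod.const_mul _
      · filter_upwards with σ
        have : Continuous fun ξ : V → ℝ => Real.exp (- ham G W P Λ (comb Λ σ ξ)) := by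
          apply Real.continuous_exp.comp
          apply Continuous.neg
          exact hhamc.comp ((comb_continuous Λ).comp (continuous_const.prodMk continuous_id))
        exact this.continuousAt
    have hNcont : Continuous N := by
      rw [continuous_iff_continuousAt]
      intro ξ₀
      set K : ℝ := (∑ z ∈ bd, |ξ₀ z|) + 1 with hKdef
      have hK0 : 0 ≤ K := by have := hKξ0 ξ₀; linarith
      have hev : ∀ᶠ ξ : V → ℝ in nhds ξ₀, ∀ y ∈ bd, |ξ y| ≤ K := by
        rw [eventually_all_finset]
        intro y hy
        have ht : Tendsto (fun ξ : V → ℝ => |ξ y|) (nhds ξ₀) (nhds |ξ₀ y|) :=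
          ((continuous_abs.comp (continuous_apply y)).tendsto ξ₀)
        have hlt : |ξ₀ y| < K := by
          have := hKξ ξ₀ y hy; rw [hKdef]; linarith
        exact (ht.eventually_lt_const hlt).mono fun ξ h => h.le
      apply continuousAt_of_dominated (bound := fun σ : ↥Λ → ℝ =>
        ‖f‖ * (Real.exp (CK K) * ∏ x : ↥Λ, g (σ x)))
      · filter_upwards with ξ
        exact ((hexpc ξ).mul (f.continuous.comp (hcomb ξ))).aestronglyMeasurable
      · filter_upwards [hev] with ξ hξK
        filter_upwards with σ
        rw [Real.norm_eq_abs, abs_mul, abs_of_pos (Real.exp_pos _)]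
        have h1 : |f (comb Λ σ ξ)| ≤ ‖f‖ := by
          rw [← Real.norm_eq_abs]; exact f.norm_coe_le_norm _
        have h2 := key K hK0 σ ξ hξK
        have h3 : (0:ℝ) ≤ Real.exp (CK K) * ∏ x : ↥Λ, g (σ x) :=
          le_trans (Real.exp_pos _).le h2
        calc Real.exp (- ham G W P Λ (comb Λ σ ξ)) * |f (comb Λ σ ξ)|
            ≤ (Real.exp (CK K) * ∏ x : ↥Λ, g (σ x)) * ‖f‖ := by
              apply mul_le_mul h2 h1 (abs_nonneg _) h3
          _ = ‖f‖ * (Real.exp (CK K) * ∏ x : ↥Λ, g (σ x)) := by ring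
      · exact (hGprod.const_mul _).const_mul _
      · filter_upwards with σ
        have : Continuous fun ξ : V → ℝ =>
            Real.exp (- ham G W P Λ (comb Λ σ ξ)) * f (comb Λ σ ξ) := by
          have hc : Continuous fun ξ : V → ℝ => comb Λ σ ξ :=
            (comb_continuous Λ).comp (continuous_const.prodMk continuous_id)
          exact (Real.continuous_exp.comp ((hhamc.comp hc).neg)).mul (f.continuous.comp hc)
        exact this.continuousAt
    have : (fun ξ : V → ℝ => ∫ ω, f ω ∂(gibbsKer G W P Λ ξ))
        = fun ξ : V → ℝ => (partZ G W P Λ ξ)⁻¹ * N ξ := funext hrw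
    rw [this]
    exact (hZcont.inv₀ fun ξ => (hZpos ξ).ne').mul hNcont
  · -- boundedness
    refine ⟨‖f‖, fun ξ => ?_⟩
    rw [hrw ξ, abs_mul, abs_inv, abs_of_pos (hZpos ξ)]
    have h1 := hNle ξ
    have h2 : (partZ G W P Λ ξ)⁻¹ * |N ξ| ≤ (partZ G W P Λ ξ)⁻¹ * (‖f‖ * partZ G W P Λ ξ) :=
      mul_le_mul_of_nonneg_left h1 (inv_nonneg.mpr (hZpos ξ).le)
    refine h2.trans ?_
    rw [mul_comm ‖f‖, ← mul_assoc, inv_mul_cancel₀ (hZpos ξ).ne', one_mul]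
end
end

section
/- Compact embedding of weighted sequence spaces. Let 0 < α' ≤ α, 0 < p ≤ p', and suppose Σ_{x∈V} exp(−α' ρ(o,x)) < ∞. Then L^{p'}(V,w_{α'}) ⊆ L^p(V,w_α), and there is a constant C > 0 with ‖ω‖_{p,α} ≤ C‖ω‖_{p',α'} for all ω ∈ L^{p'}(V,w_{α'}). Moreover, if (p',α') ≠ (p,α) (i.e. p' > p or α' < α), the embedding is compact: every set bounded in the norm ‖·‖_{p',α'} is relatively compact in (L^p(V,w_α), ‖·‖_{p,α}). -/
open MeasureTheory Real Filter

noncomputable section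

variable {V : Type} [Countable V]

/-- The norm `‖ω‖_{p,α} = (Σ_x |ω(x)|^p w_α(x))^{1/p}`. -/
def normP (G : SimpleGraph V) (o : V) (p α : ℝ) (ω : V → ℝ) : ℝ :=
  (∑' x : V, |ω x| ^ p * wgt G o α x) ^ (1 / p)

open Topology

namespace CEaux

set_option linter.unusedSectionVars false

variable (G : SimpleGraph V) (o : V)

lemma wgt_pos (α : ℝ) (x : V) : 0 < wgt G o α x := Real.exp_pos _

lemma wgt_nonneg (α : ℝ) (x : V) : 0 ≤ wgt G o α x := (wgt_pos G o α x).le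

lemma wgt_le_one {α : ℝ} (hα : 0 ≤ α) (x : V) : wgt G o α x ≤ 1 := by
  have hd : (0:ℝ) ≤ (G.dist o x : ℝ) := Nat.cast_nonneg _
  have : -α * (G.dist o x : ℝ) ≤ 0 := by nlinarith
  calc wgt G o α x = Real.exp (-α * (G.dist o x : ℝ)) := rfl
    _ ≤ Real.exp 0 := Real.exp_le_exp.2 this
    _ = 1 := Real.exp_zero

lemma wgt_mono {α' α : ℝ} (h : α' ≤ α) (x : V) : wgt G o α x ≤ wgt G o α' x := by
  have hd : (0:ℝ) ≤ (G.dist o x : ℝ) := Nat.cast_nonneg _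
  exact Real.exp_le_exp.2 (by nlinarith)

lemma wgt_rpow (α c : ℝ) (x : V) : wgt G o α x ^ c = wgt G o (c * α) x := by
  unfold wgt
  rw [← Real.exp_mul]
  ring_nf

lemma wgt_add (a b : ℝ) (x : V) : wgt G o a x * wgt G o b x = wgt G o (a + b) x := by
  unfold wgt
  rw [← Real.exp_add]
  ring_nf

lemma rpow_le_one_add_rpow {a p p' : ℝ} (ha : 0 ≤ a) (hp : 0 ≤ p) (hpp : p ≤ p') :
    a ^ p ≤ 1 + a ^ p' := by
  rcases le_total a 1 with h | h
  · have : a ^ p ≤ 1 := Real.rpow_le_one ha h hp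
    have h2 : 0 ≤ a ^ p' := Real.rpow_nonneg ha _
    linarith
  · have : a ^ p ≤ a ^ p' := Real.rpow_le_rpow_of_exponent_le h hpp
    linarith

lemma abs_sub_rpow_le (a b q : ℝ) (hq : 0 < q) :
    |a - b| ^ q ≤ 2 ^ q * (|a| ^ q + |b| ^ q) := by
  have h1 : |a - b| ≤ 2 * max |a| |b| := by
    calc |a - b| ≤ |a| + |b| := abs_sub a b
      _ ≤ max |a| |b| + max |a| |b| := by
          gcongr <;> [exact le_max_left _ _; exact le_max_right _ _]
      _ = 2 * max |a| |b| := by ring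
  have hm : (0:ℝ) ≤ max |a| |b| := le_trans (abs_nonneg a) (le_max_left _ _)
  calc |a - b| ^ q ≤ (2 * max |a| |b|) ^ q :=
        Real.rpow_le_rpow (abs_nonneg _) h1 hq.le
    _ = 2 ^ q * (max |a| |b|) ^ q := Real.mul_rpow (by norm_num) hm
    _ ≤ 2 ^ q * (|a| ^ q + |b| ^ q) := by
        have : (max |a| |b|) ^ q ≤ |a| ^ q + |b| ^ q := by
          rcases max_cases |a| |b| with ⟨he, -⟩ | ⟨he, -⟩ <;> rw [he]
          · nlinarith [Real.rpow_nonneg (abs_nonneg b) q]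
          · nlinarith [Real.rpow_nonneg (abs_nonneg a) q]
        nlinarith [Real.rpow_nonneg (by norm_num : (0:ℝ) ≤ 2) q]

/-- Embedding on the level of summability. -/
lemma mem_tempered {α' α p p' : ℝ} (hαα : α' ≤ α) (hp : 0 < p) (hpp : p ≤ p')
    (hw' : Summable (wgt G o α')) {ω : V → ℝ}
    (hω : Summable fun x => |ω x| ^ p' * wgt G o α' x) :
    Summable fun x => |ω x| ^ p * wgt G o α x := by
  refine Summable.of_nonneg_of_le (fun x => ?_) (fun x => ?_) (hw'.add hω)
  · exact mul_nonneg (Real.rpow_nonneg (abs_nonneg _) _) (wgt_nonneg G o α x)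
  calc |ω x| ^ p * wgt G o α x ≤ (1 + |ω x| ^ p') * wgt G o α' x := by
        apply mul_le_mul (rpow_le_one_add_rpow (abs_nonneg _) hp.le hpp)
          (wgt_mono G o hαα x) (wgt_nonneg G o α x)
        have := Real.rpow_nonneg (abs_nonneg (ω x)) p'
        linarith
    _ = wgt G o α' x + |ω x| ^ p' * wgt G o α' x := by ring


lemma rpow_one_div_rpow {S q : ℝ} (hS : 0 ≤ S) (hq : q ≠ 0) : (S ^ (1/q)) ^ q = S := by
  rw [← Real.rpow_mul hS, one_div_mul_cancel hq, Real.rpow_one]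

lemma normP_nonneg (p α : ℝ) (ω : V → ℝ) : 0 ≤ normP G o p α ω :=
  Real.rpow_nonneg (tsum_nonneg fun x =>
    mul_nonneg (Real.rpow_nonneg (abs_nonneg _) _) (wgt_nonneg G o α x)) _

/-- The quantitative norm bound. -/
lemma norm_bound {α' α p p' : ℝ} (hαα : α' ≤ α) (hp : 0 < p) (hpp : p ≤ p')
    (hw' : Summable (wgt G o α')) {ω : V → ℝ}
    (hω : Summable fun x => |ω x| ^ p' * wgt G o α' x) :
    normP G o p α ω ≤
      ((∑' x : V, wgt G o α' x) + 1) ^ (1/p) * normP G o p' α' ω := by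
  have hp' : 0 < p' := hp.trans_le hpp
  set A : ℝ := ∑' x : V, wgt G o α' x with hA
  have hA0 : 0 ≤ A := tsum_nonneg fun x => wgt_nonneg G o α' x
  set S' : ℝ := ∑' x : V, |ω x| ^ p' * wgt G o α' x with hS'
  have hS'0 : 0 ≤ S' :=
    tsum_nonneg fun x => mul_nonneg (Real.rpow_nonneg (abs_nonneg _) _) (wgt_nonneg G o α' x)
  rcases eq_or_lt_of_le hS'0 with hz | hS'pos
  · -- the function is zero
    have hterm : ∀ x, |ω x| ^ p * wgt G o α x = 0 := by
      intro x
      have h1 : |ω x| ^ p' * wgt G o α' x ≤ S' :=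
        Summable.le_tsum hω x fun y _ =>
          mul_nonneg (Real.rpow_nonneg (abs_nonneg _) _) (wgt_nonneg G o α' y)
      have h2 : 0 ≤ |ω x| ^ p' * wgt G o α' x :=
        mul_nonneg (Real.rpow_nonneg (abs_nonneg _) _) (wgt_nonneg G o α' x)
      have h3 : |ω x| ^ p' * wgt G o α' x = 0 := le_antisymm (by rw [← hz] at h1; exact h1) h2
      have h4 : |ω x| ^ p' = 0 := by
        rcases mul_eq_zero.1 h3 with h | h
        · exact h
        · exact absurd h (wgt_pos G o α' x).ne'
      have h5 : |ω x| = 0 := by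
        by_contra hne
        have : 0 < |ω x| := lt_of_le_of_ne (abs_nonneg _) (Ne.symm hne)
        exact absurd h4 (Real.rpow_pos_of_pos this p').ne'
      rw [h5, Real.zero_rpow hp.ne', zero_mul]
    have hL : normP G o p α ω = 0 := by
      unfold normP
      rw [tsum_congr hterm, tsum_zero, Real.zero_rpow (one_div_ne_zero hp.ne')]
    rw [hL]
    exact mul_nonneg (Real.rpow_nonneg (by linarith) _) (normP_nonneg G o p' α' ω)
  · set t : ℝ := normP G o p' α' ω with htdef
    have htS : t = S' ^ (1/p') := rfl
    have ht : 0 < t := by rw [htS]; exact Real.rpow_pos_of_pos hS'pos _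
    have htp' : t ^ p' = S' := by rw [htS]; exact rpow_one_div_rpow hS'0 hp'.ne'
    -- pointwise bound
    have hpt : ∀ x, |ω x| ^ p * wgt G o α x ≤
        t ^ p * wgt G o α' x + t ^ (p - p') * (|ω x| ^ p' * wgt G o α' x) := by
      intro x
      set a : ℝ := |ω x| with hadef
      have ha : 0 ≤ a := abs_nonneg _
      have hT1 : 0 < t ^ p := Real.rpow_pos_of_pos ht _
      have hT2 : 0 < t ^ p' := Real.rpow_pos_of_pos ht _
      have h5 : (a/t) ^ p ≤ 1 + (a/t) ^ p' :=
        rpow_le_one_add_rpow (div_nonneg ha ht.le) hp.le hpp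
      rw [Real.div_rpow ha ht.le, Real.div_rpow ha ht.le] at h5
      have h7 : a ^ p ≤ (1 + a ^ p' / t ^ p') * t ^ p := (div_le_iff₀ hT1).1 h5
      have hsub : t ^ (p - p') = t ^ p / t ^ p' := Real.rpow_sub ht p p'
      have key : a ^ p ≤ t ^ p + t ^ (p - p') * a ^ p' := by
        have h8 : (1 + a ^ p' / t ^ p') * t ^ p = t ^ p + t ^ p / t ^ p' * a ^ p' := by
          field_simp
        rw [hsub]; rw [h8] at h7; linarith
      calc a ^ p * wgt G o α x ≤ (t ^ p + t ^ (p - p') * a ^ p') * wgt G o α' x := by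
            apply mul_le_mul key (wgt_mono G o hαα x) (wgt_nonneg G o α x)
            have h9 : 0 ≤ t ^ (p - p') := (Real.rpow_pos_of_pos ht _).le
            have h10 : 0 ≤ a ^ p' := Real.rpow_nonneg ha _
            nlinarith
        _ = t ^ p * wgt G o α' x + t ^ (p - p') * (a ^ p' * wgt G o α' x) := by ring
    have hL : Summable fun x => |ω x| ^ p * wgt G o α x :=
      mem_tempered G o hαα hp hpp hw' hω
    have hR1 : Summable fun x => t ^ p * wgt G o α' x := hw'.mul_left _
    have hR2 : Summable fun x => t ^ (p - p') * (|ω x| ^ p' * wgt G o α' x) := hω.mul_left _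
    have hD : (∑' x : V, |ω x| ^ p * wgt G o α x) ≤ (A + 1) * t ^ p := by
      calc (∑' x : V, |ω x| ^ p * wgt G o α x)
          ≤ ∑' x : V, (t ^ p * wgt G o α' x + t ^ (p - p') * (|ω x| ^ p' * wgt G o α' x)) :=
            Summable.tsum_le_tsum hpt hL (hR1.add hR2)
        _ = t ^ p * A + t ^ (p - p') * S' := by
            rw [Summable.tsum_add hR1 hR2, tsum_mul_left, tsum_mul_left]
        _ = (A + 1) * t ^ p := by
            rw [← htp', ← Real.rpow_add ht]
            ring_nf
    have hD0 : 0 ≤ ∑' x : V, |ω x| ^ p * wgt G o α x :=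
      tsum_nonneg fun x => mul_nonneg (Real.rpow_nonneg (abs_nonneg _) _) (wgt_nonneg G o α x)
    calc normP G o p α ω = (∑' x : V, |ω x| ^ p * wgt G o α x) ^ (1/p) := rfl
      _ ≤ ((A + 1) * t ^ p) ^ (1/p) :=
          Real.rpow_le_rpow hD0 hD (by positivity)
      _ = (A + 1) ^ (1/p) * (t ^ p) ^ (1/p) :=
          Real.mul_rpow (by linarith) (Real.rpow_nonneg ht.le _)
      _ = (A + 1) ^ (1/p) * t := by
          rw [← Real.rpow_mul ht.le, mul_one_div, div_self hp.ne', Real.rpow_one]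


lemma tsum_subtype_le_of_nonneg {f : V → ℝ} (hf : Summable f) (h0 : ∀ x, 0 ≤ f x)
    (F : Finset V) : (∑' x : {x : V // x ∉ F}, f x.1) ≤ ∑' x : V, f x :=
  Summable.tsum_le_tsum_of_inj (Subtype.val) Subtype.val_injective (fun c _ => h0 c)
    (fun _ => le_rfl) (hf.subtype _) hf

/-- Uniform smallness of tails for functions bounded in the `(p', α')`-norm,
in the strict case. -/
lemma tail_small {α' α p p' : ℝ} (hα' : 0 < α') (hαα : α' ≤ α) (hp : 0 < p) (hpp : p ≤ p')
    (hw' : Summable (wgt G o α')) (hstrict : p < p' ∨ α' < α)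
    {ε T : ℝ} (hε : 0 < ε) (hT : 0 ≤ T) :
    ∃ F : Finset V, ∀ v : V → ℝ,
      Summable (fun x => |v x| ^ p' * wgt G o α' x) →
      (∑' x : V, |v x| ^ p' * wgt G o α' x) ≤ T →
      ∑' x : {x : V // x ∉ F}, |v x.1| ^ p * wgt G o α x.1 ≤ ε := by
  have hp' : 0 < p' := hp.trans_le hpp
  rcases eq_or_lt_of_le hpp with heq | hlt
  · -- p = p', hence α' < α
    subst heq
    have hαlt : α' < α := hstrict.resolve_left (lt_irrefl p)
    have hcpos : 0 < (α - α') / α' := div_pos (by linarith) hα'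
    have hxpos : 0 < ε / (T + 1) := div_pos hε (by linarith)
    set δ' : ℝ := (ε / (T + 1)) ^ (α' / (α - α')) with hδ'def
    have hδ'pos : 0 < δ' := Real.rpow_pos_of_pos hxpos _
    have hmem : ((fun x => wgt G o α' x) ⁻¹' Set.Iio δ')ᶜ.Finite :=
      Filter.mem_cofinite.mp (hw'.tendsto_cofinite_zero (Iio_mem_nhds hδ'pos))
    refine ⟨hmem.toFinset, fun v hv hvT => ?_⟩
    have hsmall : ∀ x : V, x ∉ hmem.toFinset → wgt G o (α - α') x ≤ ε / (T + 1) := by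
      intro x hx
      rw [Set.Finite.mem_toFinset, Set.notMem_compl_iff, Set.mem_preimage, Set.mem_Iio] at hx
      have h1 : wgt G o (α - α') x = (wgt G o α' x) ^ ((α - α') / α') := by
        rw [wgt_rpow, div_mul_cancel₀ _ hα'.ne']
      have h2 : (wgt G o α' x) ^ ((α - α') / α') ≤ δ' ^ ((α - α') / α') :=
        Real.rpow_le_rpow (wgt_nonneg G o α' x) hx.le hcpos.le
      have h3 : δ' ^ ((α - α') / α') = ε / (T + 1) := by
        rw [hδ'def, ← Real.rpow_mul hxpos.le]
        rw [show α' / (α - α') * ((α - α') / α') = 1 by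
          rw [div_mul_div_comm, mul_comm α' (α - α')]
          exact div_self (ne_of_gt (by nlinarith))]
        exact Real.rpow_one _
      rw [h1]; rw [h3] at h2; exact h2
    have hwsplit : ∀ y : V, wgt G o α y = wgt G o α' y * wgt G o (α - α') y := by
      intro y
      rw [wgt_add, show α' + (α - α') = α by ring]
    have hLfull : Summable fun x => |v x| ^ p * wgt G o α x :=
      mem_tempered G o hαα hp le_rfl hw' hv
    have hRfull : Summable fun x => (ε / (T + 1)) * (|v x| ^ p * wgt G o α' x) :=
      hv.mul_left _
    have htail : (∑' x : {x : V // x ∉ hmem.toFinset}, |v x.1| ^ p * wgt G o α' x.1) ≤ T :=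
      le_trans (tsum_subtype_le_of_nonneg hv
        (fun x => mul_nonneg (Real.rpow_nonneg (abs_nonneg _) _) (wgt_nonneg G o α' x)) _) hvT
    have hsL : Summable (fun x : {x : V // x ∉ hmem.toFinset} => |v x.1| ^ p * wgt G o α x.1) :=
      hLfull.subtype _
    have hsR : Summable (fun x : {x : V // x ∉ hmem.toFinset} =>
        (ε / (T + 1)) * (|v x.1| ^ p * wgt G o α' x.1)) := hRfull.subtype _
    calc (∑' x : {x : V // x ∉ hmem.toFinset}, |v x.1| ^ p * wgt G o α x.1)
        ≤ ∑' x : {x : V // x ∉ hmem.toFinset}, (ε / (T + 1)) * (|v x.1| ^ p * wgt G o α' x.1) := by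
          apply Summable.tsum_le_tsum _ hsL hsR
          intro x
          rw [hwsplit x.1, ← mul_assoc]
          calc |v x.1| ^ p * wgt G o α' x.1 * wgt G o (α - α') x.1
              ≤ |v x.1| ^ p * wgt G o α' x.1 * (ε / (T + 1)) := by
                apply mul_le_mul_of_nonneg_left (hsmall x.1 x.2)
                exact mul_nonneg (Real.rpow_nonneg (abs_nonneg _) _) (wgt_nonneg G o α' x.1)
            _ = (ε / (T + 1)) * (|v x.1| ^ p * wgt G o α' x.1) := by ring
      _ = (ε / (T + 1)) * ∑' x : {x : V // x ∉ hmem.toFinset}, |v x.1| ^ p * wgt G o α' x.1 :=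
          tsum_mul_left
      _ ≤ (ε / (T + 1)) * T := mul_le_mul_of_nonneg_left htail hxpos.le
      _ ≤ ε := by
          rw [div_mul_eq_mul_div, div_le_iff₀ (by linarith : (0:ℝ) < T + 1)]
          nlinarith
  · -- p < p'
    set l : ℝ := p / p' with hldef
    have hl0 : 0 < l := div_pos hp hp'
    have hl1 : l < 1 := (div_lt_one hp').2 hlt
    set m : ℝ := 1 - l with hmdef
    have hm : 0 < m := by simp only [hmdef]; linarith
    set γ : ℝ := (α - l * α') / m with hγdef
    have hγ : α' ≤ γ := by
      rw [hγdef, le_div_iff₀ hm]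
      simp only [hmdef]
      nlinarith
    have hsumh : Summable (wgt G o γ) :=
      Summable.of_nonneg_of_le (fun x => wgt_nonneg G o γ x) (fun x => wgt_mono G o hγ x) hw'
    set c : ℝ := ε / (2 * (T + 1)) with hcdef
    have hc : 0 < c := div_pos hε (by linarith)
    set c' : ℝ := c ^ (-(l / m)) with hc'def
    have hc' : 0 < c' := Real.rpow_pos_of_pos hc _
    set K : ℝ := m * c' with hKdef
    have hK : 0 < K := mul_pos hm hc'
    -- choose the finset
    have htt := tendsto_tsum_compl_atTop_zero (fun x : V => wgt G o γ x)
    have h2 := (tendsto_order.1 htt).2 _ (by positivity : 0 < ε / (2 * K))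
    obtain ⟨F, hF⟩ := h2.exists
    refine ⟨F, fun v hv hvT => ?_⟩
    -- pointwise bound
    have hpt : ∀ x : V, |v x| ^ p * wgt G o α x ≤
        (l * c) * (|v x| ^ p' * wgt G o α' x) + K * wgt G o γ x := by
      intro x
      set s : ℝ := |v x| ^ p' * wgt G o α' x with hsdef
      have hs0 : 0 ≤ s :=
        mul_nonneg (Real.rpow_nonneg (abs_nonneg _) _) (wgt_nonneg G o α' x)
      set g : ℝ := wgt G o γ x with hgdef
      have hg0 : 0 ≤ g := wgt_nonneg G o γ x
      -- identity
      have hid : |v x| ^ p * wgt G o α x = s ^ l * g ^ m := by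
        rw [hsdef, hgdef, Real.mul_rpow (Real.rpow_nonneg (abs_nonneg _) _) (wgt_nonneg G o α' x),
          ← Real.rpow_mul (abs_nonneg _), wgt_rpow, wgt_rpow,
          show p' * l = p by rw [hldef]; field_simp,
          show m * γ = α - l * α' by rw [hγdef]; field_simp,
          mul_assoc, wgt_add, show l * α' + (α - l * α') = α by ring]
      -- scaling
      have hscale : s ^ l * g ^ m = (c * s) ^ l * (c' * g) ^ m := by
        rw [Real.mul_rpow hc.le hs0, Real.mul_rpow hc'.le hg0, hc'def,
          ← Real.rpow_mul hc.le,
          show -(l / m) * m = -l by rw [neg_mul, div_mul_cancel₀ _ hm.ne']]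
        have h1 : c ^ l * c ^ (-l) = 1 := by
          rw [← Real.rpow_add hc]; simp
        calc s ^ l * g ^ m = (c ^ l * c ^ (-l)) * (s ^ l * g ^ m) := by rw [h1]; ring
          _ = c ^ l * s ^ l * (c ^ (-l) * g ^ m) := by ring
      have hamgm : (c * s) ^ l * (c' * g) ^ m ≤ l * (c * s) + m * (c' * g) :=
        Real.geom_mean_le_arith_mean2_weighted hl0.le hm.le
          (mul_nonneg hc.le hs0) (mul_nonneg hc'.le hg0) (by rw [hmdef]; ring)
      rw [hid, hscale]
      calc (c * s) ^ l * (c' * g) ^ m ≤ l * (c * s) + m * (c' * g) := hamgm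
        _ = (l * c) * s + K * g := by rw [hKdef]; ring
    have hLfull : Summable fun x => |v x| ^ p * wgt G o α x :=
      mem_tempered G o hαα hp hlt.le hw' hv
    have hR1 : Summable fun x => (l * c) * (|v x| ^ p' * wgt G o α' x) := hv.mul_left _
    have hR2 : Summable fun x => K * wgt G o γ x := hsumh.mul_left _
    have htails : (∑' x : {x : V // x ∉ F}, |v x.1| ^ p' * wgt G o α' x.1) ≤ T :=
      le_trans (tsum_subtype_le_of_nonneg hv
        (fun x => mul_nonneg (Real.rpow_nonneg (abs_nonneg _) _) (wgt_nonneg G o α' x)) _) hvT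
    have htails0 : 0 ≤ ∑' x : {x : V // x ∉ F}, |v x.1| ^ p' * wgt G o α' x.1 :=
      tsum_nonneg fun x =>
        mul_nonneg (Real.rpow_nonneg (abs_nonneg _) _) (wgt_nonneg G o α' x.1)
    have htailh : (∑' x : {x : V // x ∉ F}, wgt G o γ x.1) ≤ ε / (2 * K) := hF.le
    calc (∑' x : {x : V // x ∉ F}, |v x.1| ^ p * wgt G o α x.1)
        ≤ ∑' x : {x : V // x ∉ F},
            ((l * c) * (|v x.1| ^ p' * wgt G o α' x.1) + K * wgt G o γ x.1) :=
          Summable.tsum_le_tsum (fun x => hpt x.1) (hLfull.subtype _) ((hR1.add hR2).subtype _)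
      _ = (l * c) * (∑' x : {x : V // x ∉ F}, |v x.1| ^ p' * wgt G o α' x.1)
            + K * ∑' x : {x : V // x ∉ F}, wgt G o γ x.1 := by
          have hs1 : Summable (fun x : {x : V // x ∉ F} =>
              (l * c) * (|v x.1| ^ p' * wgt G o α' x.1)) := hR1.subtype _
          have hs2 : Summable (fun x : {x : V // x ∉ F} => K * wgt G o γ x.1) :=
            hR2.subtype _
          rw [Summable.tsum_add hs1 hs2, tsum_mul_left, tsum_mul_left]
      _ ≤ (l * c) * T + K * (ε / (2 * K)) := by
          apply add_le_add
          · exact mul_le_mul_of_nonneg_left htails (by positivity)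
          · exact mul_le_mul_of_nonneg_left htailh hK.le
      _ ≤ ε := by
          have hKc : K * (ε / (2 * K)) = ε / 2 := by field_simp
          have hcT : c * T ≤ ε / 2 := by
            rw [hcdef, div_mul_eq_mul_div,
              div_le_div_iff₀ (by linarith : (0:ℝ) < 2 * (T + 1)) (by norm_num : (0:ℝ) < 2)]
            nlinarith
          have : (l * c) * T ≤ c * T := by nlinarith [mul_nonneg hc.le hT]
          rw [hKc]
          linarith

end CEaux


/-- **Compact embedding of weighted sequence spaces.** -/
theorem compact_embedding_weighted_sequence_spaces
    (G : SimpleGraph V) (hconn : G.Connected) (o : V)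
    (α' α p p' : ℝ) (hα' : 0 < α') (hαα : α' ≤ α) (hp : 0 < p) (hpp : p ≤ p')
    (hsum : Summable fun x : V => Real.exp (-α' * (G.dist o x : ℝ))) :
    (tempered G o p' α' ⊆ tempered G o p α) ∧
    (∃ C : ℝ, 0 < C ∧ ∀ ω ∈ tempered G o p' α',
      normP G o p α ω ≤ C * normP G o p' α' ω) ∧
    ((p < p' ∨ α' < α) → ∀ S : Set (V → ℝ), S ⊆ tempered G o p' α' →
      (∃ R : ℝ, ∀ ω ∈ S, normP G o p' α' ω ≤ R) →
      ∀ u : ℕ → (V → ℝ), (∀ n, u n ∈ S) →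
        ∃ ω ∈ tempered G o p α, ∃ φ : ℕ → ℕ, StrictMono φ ∧
          Filter.Tendsto (fun n => normP G o p α (u (φ n) - ω)) Filter.atTop (nhds 0)) := by
  have hp' : 0 < p' := hp.trans_le hpp
  have hw' : Summable (wgt G o α') := hsum
  refine ⟨?_, ?_, ?_⟩
  · intro ω hω
    exact CEaux.mem_tempered G o hαα hp hpp hw' hω
  · refine ⟨((∑' x : V, wgt G o α' x) + 1) ^ (1/p), ?_, ?_⟩
    · apply Real.rpow_pos_of_pos
      have : 0 ≤ ∑' x : V, wgt G o α' x := tsum_nonneg fun x => CEaux.wgt_nonneg G o α' x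
      linarith
    · intro ω hω
      exact CEaux.norm_bound G o hαα hp hpp hw' hω
  · intro hstrict S hSsub hbdd u hu
    obtain ⟨R, hR⟩ := hbdd
    have hR0 : 0 ≤ R := le_trans (CEaux.normP_nonneg G o p' α' (u 0)) (hR _ (hu 0))
    set T0 : ℝ := R ^ p' with hT0def
    have hT00 : 0 ≤ T0 := Real.rpow_nonneg hR0 _
    have husum : ∀ n, Summable fun x => |u n x| ^ p' * wgt G o α' x := fun n => hSsub (hu n)
    have hterm0 : ∀ (v : V → ℝ) (q β : ℝ) (x : V), 0 ≤ |v x| ^ q * wgt G o β x := fun v q β x =>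
      mul_nonneg (Real.rpow_nonneg (abs_nonneg _) _) (CEaux.wgt_nonneg G o β x)
    have hSn : ∀ n, (∑' x : V, |u n x| ^ p' * wgt G o α' x) ≤ T0 := by
      intro n
      have h0 : 0 ≤ ∑' x : V, |u n x| ^ p' * wgt G o α' x :=
        tsum_nonneg fun x => hterm0 (u n) p' α' x
      have h1 : normP G o p' α' (u n) ≤ R := hR _ (hu n)
      have h2 : ((∑' x : V, |u n x| ^ p' * wgt G o α' x) ^ (1/p')) ^ p' ≤ R ^ p' :=
        Real.rpow_le_rpow (Real.rpow_nonneg h0 _) h1 hp'.le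
      rwa [CEaux.rpow_one_div_rpow h0 hp'.ne'] at h2
    -- uniform pointwise bound
    set M : V → ℝ := fun x => (T0 / wgt G o α' x) ^ (1/p') with hMdef
    have hub : ∀ n x, |u n x| ≤ M x := by
      intro n x
      have h1 : |u n x| ^ p' * wgt G o α' x ≤ T0 :=
        le_trans (Summable.le_tsum (husum n) x fun y _ => hterm0 (u n) p' α' y) (hSn n)
      have h2 : |u n x| ^ p' ≤ T0 / wgt G o α' x :=
        (le_div_iff₀ (CEaux.wgt_pos G o α' x)).2 h1
      have h3 : (|u n x| ^ p') ^ (1/p') ≤ (T0 / wgt G o α' x) ^ (1/p') :=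
        Real.rpow_le_rpow (Real.rpow_nonneg (abs_nonneg _) _) h2 (by positivity)
      rwa [← Real.rpow_mul (abs_nonneg _), mul_one_div, div_self hp'.ne',
        Real.rpow_one] at h3
    -- extract a pointwise convergent subsequence
    have hK : IsCompact (Set.univ.pi fun x : V => Set.Icc (-(M x)) (M x)) :=
      isCompact_univ_pi fun x => isCompact_Icc
    have hmemK : ∀ n, u n ∈ Set.univ.pi fun x : V => Set.Icc (-(M x)) (M x) := by
      intro n
      rw [Set.mem_univ_pi]
      intro x
      exact Set.mem_Icc.2 (abs_le.1 (hub n x))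
    obtain ⟨ω, -, φ, hφ, hconv⟩ := hK.tendsto_subseq hmemK
    have hpt : ∀ x, Tendsto (fun n => u (φ n) x) atTop (𝓝 (ω x)) :=
      fun x => tendsto_pi_nhds.1 hconv x
    have htx : ∀ (x : V) (β q : ℝ), 0 ≤ q →
        Tendsto (fun n => |u (φ n) x| ^ q * wgt G o β x) atTop
          (𝓝 (|ω x| ^ q * wgt G o β x)) := by
      intro x β q hq
      have h1 : Tendsto (fun n => |u (φ n) x|) atTop (𝓝 |ω x|) := (hpt x).abs
      have h2 : ContinuousAt (fun y : ℝ => y ^ q) |ω x| :=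
        Real.continuousAt_rpow_const _ _ (Or.inr hq)
      exact (h2.tendsto.comp h1).mul_const _
    -- the limit lies in the spaces
    have hωsum : Summable fun x => |ω x| ^ p' * wgt G o α' x := by
      apply summable_of_sum_le (fun x => hterm0 ω p' α' x)
      intro F
      have hlim : Tendsto (fun n => ∑ x ∈ F, |u (φ n) x| ^ p' * wgt G o α' x) atTop
          (𝓝 (∑ x ∈ F, |ω x| ^ p' * wgt G o α' x)) :=
        tendsto_finset_sum _ fun x _ => htx x α' p' hp'.le
      apply le_of_tendsto hlim
      filter_upwards with n
      exact le_trans (Summable.sum_le_tsum F (fun y _ => hterm0 (u (φ n)) p' α' y) (husum (φ n)))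
        (hSn (φ n))
    have hωT : (∑' x : V, |ω x| ^ p' * wgt G o α' x) ≤ T0 := by
      apply Summable.tsum_le_of_sum_le hωsum
      intro F
      have hlim : Tendsto (fun n => ∑ x ∈ F, |u (φ n) x| ^ p' * wgt G o α' x) atTop
          (𝓝 (∑ x ∈ F, |ω x| ^ p' * wgt G o α' x)) :=
        tendsto_finset_sum _ fun x _ => htx x α' p' hp'.le
      apply le_of_tendsto hlim
      filter_upwards with n
      exact le_trans (Summable.sum_le_tsum F (fun y _ => hterm0 (u (φ n)) p' α' y) (husum (φ n)))
        (hSn (φ n))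
    have hωtemp : Summable fun x => |ω x| ^ p * wgt G o α x :=
      CEaux.mem_tempered G o hαα hp hpp hw' hωsum
    refine ⟨ω, hωtemp, φ, hφ, ?_⟩
    -- uniform bound on the differences
    have hptw : ∀ n x, |u (φ n) x - ω x| ^ p' * wgt G o α' x ≤
        2 ^ p' * (|u (φ n) x| ^ p' * wgt G o α' x + |ω x| ^ p' * wgt G o α' x) := by
      intro n x
      have h1 := CEaux.abs_sub_rpow_le (u (φ n) x) (ω x) p' hp'
      calc |u (φ n) x - ω x| ^ p' * wgt G o α' x
          ≤ (2 ^ p' * (|u (φ n) x| ^ p' + |ω x| ^ p')) * wgt G o α' x :=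
            mul_le_mul_of_nonneg_right h1 (CEaux.wgt_nonneg G o α' x)
        _ = 2 ^ p' * (|u (φ n) x| ^ p' * wgt G o α' x + |ω x| ^ p' * wgt G o α' x) := by ring
    have hdsum' : ∀ n, Summable fun x => |u (φ n) x - ω x| ^ p' * wgt G o α' x := by
      intro n
      exact Summable.of_nonneg_of_le
        (fun x => hterm0 (fun y => u (φ n) y - ω y) p' α' x) (hptw n)
        (((husum (φ n)).add hωsum).mul_left (2 ^ p'))
    have h2p' : (0:ℝ) ≤ 2 ^ p' := Real.rpow_nonneg (by norm_num) _
    have hdT : ∀ n, (∑' x : V, |u (φ n) x - ω x| ^ p' * wgt G o α' x) ≤ 2 ^ p' * (T0 + T0) := by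
      intro n
      calc (∑' x : V, |u (φ n) x - ω x| ^ p' * wgt G o α' x)
          ≤ ∑' x : V, 2 ^ p' * (|u (φ n) x| ^ p' * wgt G o α' x + |ω x| ^ p' * wgt G o α' x) :=
            Summable.tsum_le_tsum (hptw n) (hdsum' n) (((husum (φ n)).add hωsum).mul_left _)
        _ = 2 ^ p' * ((∑' x : V, |u (φ n) x| ^ p' * wgt G o α' x)
              + ∑' x : V, |ω x| ^ p' * wgt G o α' x) := by
            rw [tsum_mul_left, Summable.tsum_add (husum (φ n)) hωsum]
        _ ≤ 2 ^ p' * (T0 + T0) := by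
            apply mul_le_mul_of_nonneg_left _ h2p'
            exact add_le_add (hSn (φ n)) hωT
    have hTnn : (0:ℝ) ≤ 2 ^ p' * (T0 + T0) := by positivity
    have hDsum : ∀ n, Summable fun x => |u (φ n) x - ω x| ^ p * wgt G o α x :=
      fun n => CEaux.mem_tempered G o hαα hp hpp hw' (hdsum' n)
    have hD0 : ∀ n, 0 ≤ ∑' x : V, |u (φ n) x - ω x| ^ p * wgt G o α x :=
      fun n => tsum_nonneg fun x => hterm0 (fun y => u (φ n) y - ω y) p α x
    have hDtend : Tendsto (fun n => ∑' x : V, |u (φ n) x - ω x| ^ p * wgt G o α x)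
        atTop (𝓝 0) := by
      rw [Metric.tendsto_atTop]
      intro ε hε
      obtain ⟨F, hF⟩ := CEaux.tail_small G o hα' hαα hp hpp hw' hstrict
        (show (0:ℝ) < ε/3 by linarith) hTnn
      have hfin : Tendsto (fun n => ∑ x ∈ F, |u (φ n) x - ω x| ^ p * wgt G o α x)
          atTop (𝓝 0) := by
        have hterms : ∀ x ∈ F,
            Tendsto (fun n => |u (φ n) x - ω x| ^ p * wgt G o α x) atTop (𝓝 0) := by
          intro x _
          have h1 : Tendsto (fun n => u (φ n) x - ω x) atTop (𝓝 0) := by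
            have := (hpt x).sub (tendsto_const_nhds (x := ω x))
            rwa [sub_self] at this
          have h2 : Tendsto (fun n => |u (φ n) x - ω x|) atTop (𝓝 0) := by
            simpa using h1.abs
          have h3 : ContinuousAt (fun y : ℝ => y ^ p) 0 :=
            Real.continuousAt_rpow_const _ _ (Or.inr hp.le)
          have h4 := (h3.tendsto.comp h2).mul_const (wgt G o α x)
          simpa [Real.zero_rpow hp.ne'] using h4
        have := tendsto_finset_sum F hterms
        simpa using this
      obtain ⟨N, hN⟩ := Metric.tendsto_atTop.1 hfin (ε/3) (by linarith)
      refine ⟨N, fun n hn => ?_⟩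
      have hsplit := Summable.sum_add_tsum_subtype_compl (hDsum n) F
      have htail := hF (fun y => u (φ n) y - ω y) (hdsum' n) (hdT n)
      have hfinsum : ∑ x ∈ F, |u (φ n) x - ω x| ^ p * wgt G o α x < ε/3 := by
        have h5 := hN n hn
        rw [Real.dist_eq, sub_zero, abs_of_nonneg (Finset.sum_nonneg fun x _ =>
          hterm0 (fun y => u (φ n) y - ω y) p α x)] at h5
        exact h5
      rw [Real.dist_eq, sub_zero, abs_of_nonneg (hD0 n), ← hsplit]
      calc (∑ x ∈ F, |u (φ n) x - ω x| ^ p * wgt G o α x)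
            + ∑' x : {x : V // x ∉ F}, |u (φ n) x.1 - ω x.1| ^ p * wgt G o α x.1
          < ε/3 + ε/3 := by
            apply add_lt_add_of_lt_of_le hfinsum htail
        _ < ε := by linarith
    have h3 : ContinuousAt (fun y : ℝ => y ^ (1/p)) 0 :=
      Real.continuousAt_rpow_const _ _ (Or.inr (by positivity))
    have hfinal := h3.tendsto.comp hDtend
    rw [Real.zero_rpow (one_div_ne_zero hp.ne')] at hfinal
    exact hfinal
end
end

section
/- Theorem 5 (summability for repulsive graphs). Let n_* > 2 be an integer, υ, ε > 0, and φ(b) = υ log b (log log b)^{1+ε} for b ≥ n_* + 1, with φ(n_* + 1) > 1. Let G ∈ 𝔾(n_*, φ). Then for any θ > 0 there exists α₀ ≥ 0 (depending only on θ, n_*, υ, ε) such that Θ(α,θ) < ∞ for every α > α₀ and every choice of the root o ∈ V. -/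
open Real

noncomputable section

/-- The repulsion function `φ(b) = υ log b (log log b)^{1+ε}`. -/
def phiRep (υ ε b : ℝ) : ℝ := υ * Real.log b * Real.log (Real.log b) ^ (1 + ε)

/-- `G` belongs to the class `𝔾(n_*, φ)`: any two distinct vertices whose degrees both
exceed `n_*` are at path distance at least `φ(max{n(x),n(y)})`. -/
def RepulsiveGraph {V : Type} (G : SimpleGraph V) [∀ v : V, Fintype (G.neighborSet v)]
    (nstar : ℕ) (φ : ℝ → ℝ) : Prop :=
  ∀ x y : V, x ≠ y → nstar < G.degree x → nstar < G.degree y →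
    φ (max (G.degree x : ℝ) (G.degree y : ℝ)) ≤ (G.dist x y : ℝ)

-- L1: packing lemma
lemma packing (A : Finset ℕ) (r : ℕ) (d : ℝ) (hd : 0 < d)
    (hA : A ⊆ Finset.range r)
    (hsep : ∀ k ∈ A, ∀ l ∈ A, k ≠ l → d ≤ |(k : ℝ) - l|) :
    (A.card : ℝ) ≤ r / d + 1 := by
  classical
  have key : ∀ k ∈ A, ∀ l ∈ A, k < l → ⌊(k:ℝ)/d⌋₊ < ⌊(l:ℝ)/d⌋₊ := by
    intro k hk l hl h
    have hsep' := hsep k hk l hl (Nat.ne_of_lt h)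
    have hkl : (k : ℝ) + d ≤ l := by
      have habs : |(k:ℝ) - l| = (l:ℝ) - k := by
        rw [abs_sub_comm, abs_of_nonneg (by
          have : (k:ℝ) ≤ l := by exact_mod_cast h.le
          linarith)]
      rw [habs] at hsep'; linarith
    have h1 : (k : ℝ)/d + 1 ≤ (l : ℝ)/d := by
      rw [div_add' _ _ _ hd.ne']
      gcongr
      linarith
    have h2 : ⌊(k:ℝ)/d⌋₊ + 1 ≤ ⌊(l:ℝ)/d⌋₊ := by
      have := Nat.floor_le_floor (R := ℝ) h1
      rwa [Nat.floor_add_one (by positivity)] at this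
    omega
  have hinj : Set.InjOn (fun k : ℕ => ⌊(k : ℝ) / d⌋₊) A := by
    intro k hk l hl hkl
    by_contra hne
    rcases lt_or_gt_of_ne hne with h | h
    · exact absurd hkl (Nat.ne_of_lt (key k hk l hl h))
    · exact absurd hkl.symm (Nat.ne_of_lt (key l hl k hk h))
  have hcard : A.card = (A.image (fun k : ℕ => ⌊(k : ℝ) / d⌋₊)).card :=
    (Finset.card_image_of_injOn hinj).symm
  have hsub : A.image (fun k : ℕ => ⌊(k : ℝ) / d⌋₊) ⊆ Finset.range (⌊(r : ℝ) / d⌋₊ + 1) := by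
    intro m hm
    simp only [Finset.mem_image] at hm
    obtain ⟨k, hk, rfl⟩ := hm
    have hkr : (k : ℝ) ≤ r := by
      have := Finset.mem_range.mp (hA hk); exact_mod_cast this.le
    have hfl : ⌊(k:ℝ)/d⌋₊ ≤ ⌊(r:ℝ)/d⌋₊ :=
      Nat.floor_le_floor (by gcongr)
    simp only [Finset.mem_range]; omega
  have : A.card ≤ ⌊(r : ℝ) / d⌋₊ + 1 := by
    rw [hcard]
    simpa using Finset.card_le_card hsub
  calc (A.card : ℝ) ≤ (⌊(r : ℝ) / d⌋₊ + 1 : ℕ) := by exact_mod_cast this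
    _ ≤ (r : ℝ)/d + 1 := by
        push_cast
        have := Nat.floor_le (R := ℝ) (a := (r:ℝ)/d) (by positivity)
        linarith

-- L2: layer cake for ℕ-valued functions on finsets
lemma layercake (s : Finset ℕ) (e : ℕ → ℕ) (E : ℕ) (he : ∀ k ∈ s, e k ≤ E) :
    ∑ k ∈ s, e k = ∑ m ∈ Finset.range E, (s.filter (fun k => m < e k)).card := by
  classical
  have inner : ∀ k ∈ s, e k = ∑ m ∈ Finset.range E, (if m < e k then 1 else 0) := by
    intro k hk
    rw [← Finset.sum_filter]
    have hfil : (Finset.range E).filter (fun m => m < e k) = Finset.range (e k) := by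
      ext m
      simp only [Finset.mem_filter, Finset.mem_range]
      have := he k hk
      omega
    rw [hfil]
    simp
  rw [Finset.sum_congr rfl inner, Finset.sum_comm]
  apply Finset.sum_congr rfl
  intro m hm
  rw [← Finset.sum_filter]
  simp

-- L4: tangent inequality
lemma tangent_ineq (ε t t' : ℝ) (hε : 0 < ε) (ht : 0 < t) (htt : t ≤ t') :
    ε * (t' - t) * t' ^ (-(1:ℝ) - ε) ≤ t ^ (-ε) - t' ^ (-ε) := by
  have ht' : 0 < t' := lt_of_lt_of_le ht htt
  have h1 : Real.log t' - Real.log t ≥ (t' - t)/t' := by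
    have := Real.log_le_sub_one_of_pos (x := t/t') (by positivity)
    rw [Real.log_div ht.ne' ht'.ne'] at this
    have h2 : t/t' - 1 = (t - t')/t' := by field_simp
    rw [h2] at this
    have : -((t-t')/t') ≤ -(Real.log t - Real.log t') := by linarith
    calc (t'-t)/t' = -((t-t')/t') := by ring
      _ ≤ Real.log t' - Real.log t := by linarith
  have h2 : t ^ (-ε) = t' ^ (-ε) * Real.exp (ε * (Real.log t' - Real.log t)) := by
    rw [Real.rpow_def_of_pos ht, Real.rpow_def_of_pos ht', ← Real.exp_add]
    ring_nf
  have h3 : Real.exp (ε * (Real.log t' - Real.log t)) ≥ 1 + ε * (Real.log t' - Real.log t) := by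
    have := Real.add_one_le_exp (ε * (Real.log t' - Real.log t)); linarith
  have ht'e : (0:ℝ) < t' ^ (-ε) := Real.rpow_pos_of_pos ht' _
  have h4 : t ^ (-ε) - t' ^ (-ε) ≥ t' ^ (-ε) * (ε * (Real.log t' - Real.log t)) := by
    rw [h2]
    nlinarith [mul_le_mul_of_nonneg_left h3 ht'e.le]
  have h5 : t' ^ (-ε) * (ε * (Real.log t' - Real.log t)) ≥ t' ^ (-ε) * (ε * ((t'-t)/t')) := by
    apply mul_le_mul_of_nonneg_left _ ht'e.le
    exact mul_le_mul_of_nonneg_left h1 hε.le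
  have h6 : t' ^ (-ε) * (ε * ((t'-t)/t')) = ε * (t' - t) * t' ^ (-(1:ℝ) - ε) := by
    rw [show (-(1:ℝ) - ε) = (-ε) + (-1) by ring, Real.rpow_add ht', Real.rpow_neg_one]
    field_simp
  linarith [h6 ▸ h5]

lemma telescope_Ico (f : ℕ → ℝ) (a b : ℕ) (hab : a ≤ b) :
    ∑ m ∈ Finset.Ico a b, (f m - f (m+1)) = f a - f b := by
  induction b, hab using Nat.le_induction with
  | base => simp
  | succ b hab ih => rw [Finset.sum_Ico_succ_top hab, ih]; ring

lemma log_two_log_two_pos : 0 < Real.log (2 * Real.log 2) := by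
  have h2 : (1:ℝ) < 2 * Real.log 2 := by
    have := Real.log_two_gt_d9
    linarith
  exact Real.log_pos h2

-- L3: uniform bound on partial sums of 1/φ(2^m)
lemma sum_inv_phi_le (υ ε : ℝ) (hυ : 0 < υ) (hε : 0 < ε) :
    ∃ C₃ : ℝ, 0 ≤ C₃ ∧ ∀ (m₀ M : ℕ), 2 ≤ m₀ →
      ∑ m ∈ Finset.Ico m₀ M,
          1 / (υ * ((m:ℝ) * Real.log 2) * (Real.log ((m:ℝ) * Real.log 2)) ^ (1+ε)) ≤ C₃ := by
  set t : ℕ → ℝ := fun m => Real.log ((m:ℝ) * Real.log 2) with ht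
  have hlog2 : (0:ℝ) < Real.log 2 := Real.log_pos (by norm_num)
  have ht2 : 0 < t 2 := by simpa [ht] using log_two_log_two_pos
  have htmono : ∀ m n : ℕ, 2 ≤ m → m ≤ n → t m ≤ t n := by
    intro m n hm hmn
    apply Real.log_le_log (by positivity)
    have : (m:ℝ) ≤ n := by exact_mod_cast hmn
    nlinarith
  have htpos : ∀ m : ℕ, 2 ≤ m → 0 < t m := fun m hm => lt_of_lt_of_le ht2 (htmono 2 m le_rfl hm)
  set c₅ : ℝ := 1 + Real.log 2 / t 2 with hc₅
  have hc₅1 : 1 ≤ c₅ := by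
    rw [hc₅]
    have : 0 ≤ Real.log 2 / t 2 := by positivity
    linarith
  have hc₅pos : 0 < c₅ := lt_of_lt_of_le one_pos hc₅1
  set C₃ : ℝ := (1/(υ * Real.log 2)) * (2/ε) * c₅ ^ (1+ε) * (t 2) ^ (-ε) with hC₃
  refine ⟨C₃, by positivity, ?_⟩
  intro m₀ M hm₀
  rcases le_or_gt M m₀ with hM | hM
  · rw [Finset.Ico_eq_empty (by omega)]
    simp only [Finset.sum_empty]
    positivity
  -- termwise bound
  have key : ∀ m ∈ Finset.Ico m₀ M,
      1 / (υ * ((m:ℝ) * Real.log 2) * (t m) ^ (1+ε))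
        ≤ (1/(υ * Real.log 2)) * (2/ε) * c₅ ^ (1+ε) * ((t m) ^ (-ε) - (t (m+1)) ^ (-ε)) := by
    intro m hm
    have hm2 : 2 ≤ m := le_trans hm₀ (Finset.mem_Ico.mp hm).1
    have hmR : (2:ℝ) ≤ (m:ℝ) := by exact_mod_cast hm2
    have htm : 0 < t m := htpos m hm2
    have htm1 : 0 < t (m+1) := htpos (m+1) (by omega)
    have hmono : t m ≤ t (m+1) := htmono m (m+1) hm2 (by omega)
    -- t (m+1) ≤ c₅ * t m
    have hstep : t (m+1) ≤ c₅ * t m := by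
      have h1 : t (m+1) = t m + Real.log (((m:ℝ)+1)/m) := by
        rw [ht]
        have : ((m:ℝ)+1) * Real.log 2 = ((m:ℝ) * Real.log 2) * (((m:ℝ)+1)/m) := by
          field_simp
        push_cast
        rw [this, Real.log_mul (by positivity) (by positivity)]
      have h2 : Real.log (((m:ℝ)+1)/m) ≤ Real.log 2 := by
        apply Real.log_le_log (by positivity)
        rw [div_le_iff₀ (by positivity)]
        nlinarith
      have h3 : Real.log 2 ≤ (Real.log 2 / t 2) * t m := by
        rw [div_mul_eq_mul_div, le_div_iff₀ ht2]
        nlinarith [htmono 2 m le_rfl hm2]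
      rw [h1, hc₅]
      nlinarith
    -- gap lower bound : t(m+1) - t m ≥ 1/(2m)
    have hgap : 1/(2*(m:ℝ)) ≤ t (m+1) - t m := by
      have h1 : t (m+1) - t m = Real.log (((m:ℝ)+1)/m) := by
        rw [ht]
        have : ((m:ℝ)+1) * Real.log 2 = ((m:ℝ) * Real.log 2) * (((m:ℝ)+1)/m) := by
          field_simp
        push_cast
        rw [this, Real.log_mul (by positivity) (by positivity)]
        ring
      have h2 : 1 - 1/(((m:ℝ)+1)/m) ≤ Real.log (((m:ℝ)+1)/m) := by
        have := Real.log_le_sub_one_of_pos (x := ((m:ℝ))/((m:ℝ)+1)) (by positivity)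
        have hinv : Real.log ((m:ℝ)/((m:ℝ)+1)) = - Real.log (((m:ℝ)+1)/m) := by
          rw [← Real.log_inv]
          congr 1
          field_simp
        rw [hinv] at this
        have hq : 1/(((m:ℝ)+1)/m) = (m:ℝ)/((m:ℝ)+1) := by field_simp
        rw [hq]
        linarith
      have hq2 : (1:ℝ) - 1/(((m:ℝ)+1)/m) = 1/((m:ℝ)+1) := by
        rw [one_div_div]
        field_simp
        ring
      have h4 : 1/(2*(m:ℝ)) ≤ 1/((m:ℝ)+1) :=
        one_div_le_one_div_of_le (by positivity) (by nlinarith)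
      rw [hq2] at h2
      rw [h1]
      linarith
    -- tangent inequality application
    have htan := tangent_ineq ε (t m) (t (m+1)) hε htm hmono
    have hneg : (-(1:ℝ) - ε) = -(1+ε) := by ring
    set P : ℝ := (t m) ^ (1+ε) with hP
    set Q : ℝ := c₅ ^ (1+ε) with hQ
    have hPpos : 0 < P := Real.rpow_pos_of_pos htm _
    have hQpos : 0 < Q := Real.rpow_pos_of_pos hc₅pos _
    -- t(m+1)^(-1-ε) ≥ (c₅ * t m)^(-1-ε) = Q⁻¹ * P⁻¹
    have hbase : t (m+1) ≤ c₅ * t m := hstep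
    have hrw : (c₅ * t m) ^ (-(1:ℝ) - ε) = Q⁻¹ * P⁻¹ := by
      rw [hneg, Real.rpow_neg (mul_nonneg hc₅pos.le htm.le), Real.mul_rpow hc₅pos.le htm.le,
        hP, hQ, mul_inv]
    have hmono2 : Q⁻¹ * P⁻¹ ≤ (t (m+1)) ^ (-(1:ℝ) - ε) := by
      rw [← hrw]
      exact Real.rpow_le_rpow_of_nonpos htm1 hbase (by linarith)
    -- chain
    have hchain : ε * (1/(2*(m:ℝ))) * (Q⁻¹ * P⁻¹) ≤ (t m) ^ (-ε) - (t (m+1)) ^ (-ε) := by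
      calc ε * (1/(2*(m:ℝ))) * (Q⁻¹ * P⁻¹)
          ≤ ε * (t (m+1) - t m) * ((t (m+1)) ^ (-(1:ℝ) - ε)) := by
            exact mul_le_mul (mul_le_mul_of_nonneg_left hgap hε.le) hmono2 (by positivity)
              (mul_nonneg hε.le (by linarith))
        _ ≤ (t m) ^ (-ε) - (t (m+1)) ^ (-ε) := htan
    -- conclude termwise
    have hLHS : 1 / (υ * ((m:ℝ) * Real.log 2) * (t m) ^ (1+ε))
        = (1/(υ * Real.log 2)) * (1/(m:ℝ)) * P⁻¹ := by
      rw [hP]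
      simp only [one_div, mul_inv]
      ring
    rw [hLHS]
    have hfinal : (1/(υ * Real.log 2)) * (1/(m:ℝ)) * P⁻¹
        ≤ (1/(υ * Real.log 2)) * (2/ε) * Q * (ε * (1/(2*(m:ℝ))) * (Q⁻¹ * P⁻¹)) := by
      have : (1/(υ * Real.log 2)) * (2/ε) * Q * (ε * (1/(2*(m:ℝ))) * (Q⁻¹ * P⁻¹))
          = (1/(υ * Real.log 2)) * (1/(m:ℝ)) * P⁻¹ := by
        field_simp
      linarith
    calc (1/(υ * Real.log 2)) * (1/(m:ℝ)) * P⁻¹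
        ≤ (1/(υ * Real.log 2)) * (2/ε) * Q * (ε * (1/(2*(m:ℝ))) * (Q⁻¹ * P⁻¹)) := hfinal
      _ ≤ (1/(υ * Real.log 2)) * (2/ε) * Q * ((t m) ^ (-ε) - (t (m+1)) ^ (-ε)) := by
          apply mul_le_mul_of_nonneg_left hchain (by positivity)
  -- sum up
  calc ∑ m ∈ Finset.Ico m₀ M,
          1 / (υ * ((m:ℝ) * Real.log 2) * (Real.log ((m:ℝ) * Real.log 2)) ^ (1+ε))
      ≤ ∑ m ∈ Finset.Ico m₀ M,
          (1/(υ * Real.log 2)) * (2/ε) * c₅ ^ (1+ε) * ((t m) ^ (-ε) - (t (m+1)) ^ (-ε)) :=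
        Finset.sum_le_sum key
    _ = (1/(υ * Real.log 2)) * (2/ε) * c₅ ^ (1+ε) * ((t m₀) ^ (-ε) - (t M) ^ (-ε)) := by
        rw [← Finset.mul_sum, telescope_Ico (fun m => (t m) ^ (-ε)) m₀ M hM.le]
    _ ≤ C₃ := by
        rw [hC₃]
        apply mul_le_mul_of_nonneg_left _ (by positivity)
        have h1 : 0 ≤ (t M) ^ (-ε) := Real.rpow_nonneg (htpos M (by omega)).le _
        have h2 : (t m₀) ^ (-ε) ≤ (t 2) ^ (-ε) :=
          Real.rpow_le_rpow_of_nonpos ht2 (htmono 2 m₀ le_rfl hm₀) (by linarith)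
        linarith

-- COUNTG: weighted geodesic-tree counting lemma
lemma countG {V : Type} (G : SimpleGraph V) [inst : ∀ v : V, Fintype (G.neighborSet v)] (o : V) :
    ∀ (r : ℕ) (t : Finset V) (g : V → ℝ) (W : ℝ), 0 ≤ W → (∀ u ∈ t, 0 ≤ g u) →
    (∀ u ∈ t, ∃ q : ℕ → V, q 0 = o ∧ q r = u ∧ (∀ k, k < r → G.Adj (q k) (q (k+1))) ∧
      (∏ k ∈ Finset.range r, (G.degree (q k) : ℝ)) * g u ≤ W) →
    ∑ u ∈ t, g u ≤ W := by
  intro r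
  induction r with
  | zero =>
    intro t g W hW hg hq
    have hsub : t ⊆ {o} := by
      intro u hu
      obtain ⟨q, hq0, hqr, -, -⟩ := hq u hu
      simp [← hqr, ← hq0]
    rcases Finset.subset_singleton_iff.mp hsub with rfl | rfl
    · simpa using hW
    · have := hq o (by simp)
      obtain ⟨q, hq0, hqr, -, hbd⟩ := this
      simpa using hbd
  | succ r ih =>
    intro t g W hW hg hq
    classical
    -- choice of geodesics
    set P : V → Prop := fun u => ∃ q : ℕ → V, q 0 = o ∧ q (r+1) = u ∧
      (∀ k, k < r+1 → G.Adj (q k) (q (k+1))) ∧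
      (∏ k ∈ Finset.range (r+1), (G.degree (q k) : ℝ)) * g u ≤ W with hP
    have hPt : ∀ u ∈ t, P u := hq
    set Q : V → ℕ → V := fun u => if h : P u then h.choose else fun _ => u with hQdef
    have hQspec : ∀ u ∈ t, (Q u) 0 = o ∧ (Q u) (r+1) = u ∧
        (∀ k, k < r+1 → G.Adj ((Q u) k) ((Q u) (k+1))) ∧
        (∏ k ∈ Finset.range (r+1), (G.degree ((Q u) k) : ℝ)) * g u ≤ W := by
      intro u hu
      have h := hPt u hu
      have he : Q u = h.choose := by simp only [hQdef]; rw [dif_pos h]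
      rw [he]
      exact h.choose_spec
    set par : V → V := fun u => Q u r with hpar
    set t' : Finset V := t.image par with ht'
    set g' : V → ℝ := fun u => ∑ x ∈ t.filter (fun x => par x = u), g x with hg'
    have hsum : ∑ u ∈ t', g' u = ∑ x ∈ t, g x := by
      rw [hg', ht']
      exact Finset.sum_fiberwise_of_maps_to (fun x hx => Finset.mem_image_of_mem par hx) g
    rw [← hsum]
    apply ih t' g' W hW
    · intro u hu
      exact Finset.sum_nonneg (fun x hx => hg x (Finset.mem_filter.mp hx).1)
    · intro u hu
      obtain ⟨x₀, hx₀t, hx₀par⟩ := Finset.mem_image.mp hu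
      set fib : Finset V := t.filter (fun x => par x = u) with hfib
      have hfibne : fib.Nonempty := ⟨x₀, Finset.mem_filter.mpr ⟨hx₀t, hx₀par⟩⟩
      -- minimal prefix product
      obtain ⟨xm, hxm, hxmmin⟩ := Finset.exists_min_image fib
        (fun x => ∏ k ∈ Finset.range r, (G.degree ((Q x) k) : ℝ)) hfibne
      have hxmt : xm ∈ t := (Finset.mem_filter.mp hxm).1
      have hxmpar : par xm = u := (Finset.mem_filter.mp hxm).2
      obtain ⟨hq0, hqr1, hadj, hbd⟩ := hQspec xm hxmt
      refine ⟨Q xm, hq0, hxmpar, fun k hk => hadj k (by omega), ?_⟩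
      -- u has positive degree
      have hadju : ∀ x ∈ fib, G.Adj u x := by
        intro x hx
        have hxt : x ∈ t := (Finset.mem_filter.mp hx).1
        have hxpar : par x = u := (Finset.mem_filter.mp hx).2
        obtain ⟨_, hxr1, hxadj, _⟩ := hQspec x hxt
        have := hxadj r (by omega)
        rwa [hxr1, show Q x r = par x from rfl, hxpar] at this
      have hdegpos : 0 < G.degree u := by
        rw [← SimpleGraph.card_neighborFinset_eq_degree]
        refine Finset.card_pos.mpr ⟨x₀, ?_⟩
        rw [SimpleGraph.mem_neighborFinset]
        exact hadju x₀ (Finset.mem_filter.mpr ⟨hx₀t, hx₀par⟩)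
      have hdeguR : (0:ℝ) < (G.degree u : ℝ) := by exact_mod_cast hdegpos
      -- fiber card ≤ degree u
      have hfibcard : fib.card ≤ G.degree u := by
        rw [← SimpleGraph.card_neighborFinset_eq_degree]
        apply Finset.card_le_card
        intro x hx
        rw [SimpleGraph.mem_neighborFinset]
        exact hadju x hx
      -- per-element bound
      have hper : ∀ x ∈ fib,
          (∏ k ∈ Finset.range r, (G.degree ((Q xm) k) : ℝ)) * g x ≤ W / (G.degree u : ℝ) := by
        intro x hx
        have hxt : x ∈ t := (Finset.mem_filter.mp hx).1
        have hxpar : par x = u := (Finset.mem_filter.mp hx).2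
        obtain ⟨-, hxr1, -, hxbd⟩ := hQspec x hxt
        have hprod : ∏ k ∈ Finset.range (r+1), (G.degree ((Q x) k) : ℝ)
            = (∏ k ∈ Finset.range r, (G.degree ((Q x) k) : ℝ)) * (G.degree u : ℝ) := by
          rw [Finset.prod_range_succ, show Q x r = par x from rfl, hxpar]
        rw [hprod] at hxbd
        rw [le_div_iff₀ hdeguR]
        calc (∏ k ∈ Finset.range r, (G.degree ((Q xm) k) : ℝ)) * g x * (G.degree u : ℝ)
            ≤ (∏ k ∈ Finset.range r, (G.degree ((Q x) k) : ℝ)) * g x * (G.degree u : ℝ) := by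
              apply mul_le_mul_of_nonneg_right _ hdeguR.le
              exact mul_le_mul_of_nonneg_right (hxmmin x hx) (hg x hxt)
          _ = (∏ k ∈ Finset.range r, (G.degree ((Q x) k) : ℝ)) * (G.degree u : ℝ) * g x := by
              ring
          _ ≤ W := hxbd
      -- sum over fiber
      calc (∏ k ∈ Finset.range r, (G.degree ((Q xm) k) : ℝ)) * g' u
          = ∑ x ∈ fib, (∏ k ∈ Finset.range r, (G.degree ((Q xm) k) : ℝ)) * g x := by
            rw [hg', Finset.mul_sum]
        _ ≤ ∑ x ∈ fib, W / (G.degree u : ℝ) := Finset.sum_le_sum hper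
        _ = fib.card * (W / (G.degree u : ℝ)) := by
            rw [Finset.sum_const, nsmul_eq_mul]
        _ ≤ (G.degree u : ℝ) * (W / (G.degree u : ℝ)) := by
            apply mul_le_mul_of_nonneg_right _ (by positivity)
            exact_mod_cast hfibcard
        _ = W := by field_simp

-- chain distance lemma
lemma chain_dist {V : Type} (G : SimpleGraph V) (hconn : G.Connected) (q : ℕ → V) (r : ℕ)
    (hadj : ∀ k, k < r → G.Adj (q k) (q (k+1))) :
    ∀ k l, k ≤ l → l ≤ r → G.dist (q k) (q l) ≤ l - k := by
  intro k l hkl hlr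
  induction l, hkl using Nat.le_induction with
  | base => simp
  | succ l hkl ih =>
    have h1 : G.dist (q k) (q l) ≤ l - k := ih (by omega)
    have h2 : G.dist (q l) (q (l+1)) = 1 :=
      SimpleGraph.dist_eq_one_iff_adj.mpr (hadj l (by omega))
    have h3 := hconn.dist_triangle (u := q k) (v := q l) (w := q (l+1))
    omega

-- geodesic existence
lemma exists_geodesic {V : Type} (G : SimpleGraph V) (hconn : G.Connected) (o x : V) :
    ∃ q : ℕ → V, q 0 = o ∧ q (G.dist o x) = x ∧
      (∀ k, k < G.dist o x → G.Adj (q k) (q (k+1))) ∧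
      (∀ k, k ≤ G.dist o x → G.dist o (q k) = k) := by
  obtain ⟨w, hw⟩ := hconn.exists_walk_length_eq_dist o x
  set r := G.dist o x with hr
  refine ⟨w.getVert, w.getVert_zero, by rw [← hw]; exact w.getVert_length, ?_, ?_⟩
  · intro k hk
    exact w.adj_getVert_succ (by omega)
  · intro k hk
    have hadj : ∀ j, j < r → G.Adj (w.getVert j) (w.getVert (j+1)) := by
      intro j hj; exact w.adj_getVert_succ (by omega)
    have hub : G.dist o (w.getVert k) ≤ k := by
      have := chain_dist G hconn w.getVert r hadj 0 k (by omega) hk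
      simpa [w.getVert_zero] using this
    have hlb : k ≤ G.dist o (w.getVert k) := by
      have h1 : G.dist (w.getVert k) x ≤ r - k := by
        have := chain_dist G hconn w.getVert r hadj k r (by omega) le_rfl
        rwa [show w.getVert r = x from by rw [← hw]; exact w.getVert_length] at this
      have h2 := hconn.dist_triangle (u := o) (v := w.getVert k) (w := x)
      omega
    omega

lemma log_log_pos_of_four_le {a : ℝ} (ha : 4 ≤ a) : 0 < Real.log (Real.log a) := by
  have h4 : (1:ℝ) < Real.log 4 := by
    rw [show (4:ℝ) = 2^2 by norm_num, Real.log_pow]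
    have := Real.log_two_gt_d9
    push_cast
    linarith
  have hla : 1 < Real.log a := lt_of_lt_of_le h4 (Real.log_le_log (by norm_num) ha)
  exact Real.log_pos hla

lemma one_lt_log_of_four_le {a : ℝ} (ha : 4 ≤ a) : 1 < Real.log a := by
  have h4 : (1:ℝ) < Real.log 4 := by
    rw [show (4:ℝ) = 2^2 by norm_num, Real.log_pow]
    have := Real.log_two_gt_d9
    push_cast
    linarith
  exact lt_of_lt_of_le h4 (Real.log_le_log (by norm_num) ha)

lemma phiRep_mono (υ ε : ℝ) (hυ : 0 < υ) (hε : 0 < ε) {a b : ℝ} (ha : 4 ≤ a) (hab : a ≤ b) :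
    phiRep υ ε a ≤ phiRep υ ε b := by
  have hb : (4:ℝ) ≤ b := le_trans ha hab
  have h1 : 0 < Real.log a := lt_trans one_pos (one_lt_log_of_four_le ha)
  have h2 : Real.log a ≤ Real.log b := Real.log_le_log (by linarith) hab
  have h3 : 0 < Real.log (Real.log a) := log_log_pos_of_four_le ha
  have h4 : Real.log (Real.log a) ≤ Real.log (Real.log b) := Real.log_le_log h1 h2
  have h5 : Real.log (Real.log a) ^ (1+ε) ≤ Real.log (Real.log b) ^ (1+ε) :=
    Real.rpow_le_rpow h3.le h4 (by linarith)
  unfold phiRep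
  have h6 : 0 ≤ Real.log (Real.log a) ^ (1+ε) := Real.rpow_nonneg h3.le _
  exact mul_le_mul (mul_le_mul_of_nonneg_left h2 hυ.le) h5 h6
    (mul_nonneg hυ.le (by linarith))

lemma phiRep_pos (υ ε : ℝ) (hυ : 0 < υ) (hε : 0 < ε) {a : ℝ} (ha : 4 ≤ a) :
    0 < phiRep υ ε a := by
  have h1 : 0 < Real.log a := lt_trans one_pos (one_lt_log_of_four_le ha)
  have h3 : 0 < Real.log (Real.log a) := log_log_pos_of_four_le ha
  unfold phiRep
  have := Real.rpow_pos_of_pos h3 (1+ε)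
  positivity

-- Lemma A: degree growth bound
lemma degree_log_bound {V : Type} (G : SimpleGraph V) [inst : ∀ v : V, Fintype (G.neighborSet v)]
    (hconn : G.Connected) (nstar : ℕ) (hn : 2 < nstar) (υ ε : ℝ) (hυ : 0 < υ) (hε : 0 < ε)
    (hrep : RepulsiveGraph G nstar (phiRep υ ε)) (o : V) (δ : ℝ) (hδ : 0 < δ) :
    ∃ C : ℝ, 0 ≤ C ∧ ∀ x : V, Real.log (G.degree x) ≤ δ * (G.dist o x) + C := by
  classical
  have hlogmono : ∀ (n m : ℕ), n ≤ m → 1 ≤ m → Real.log (n : ℝ) ≤ Real.log (m : ℝ) := by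
    intro n m hnm hm
    rcases Nat.eq_zero_or_pos n with rfl | hn0
    · simp only [Nat.cast_zero, Real.log_zero]
      exact Real.log_natCast_nonneg m
    · exact Real.log_le_log (by exact_mod_cast hn0) (by exact_mod_cast hnm)
  by_cases hH : ∃ x₁ : V, nstar < G.degree x₁
  · obtain ⟨x₁, hx₁⟩ := hH
    set K := G.degree x₁ with hK
    set R1 := G.dist o x₁ with hR1
    set cδ : ℝ := (1/(υ*δ)) ^ ((1:ℝ)/(1+ε)) with hcδ
    refine ⟨Real.log K + δ * R1 + Real.exp cδ, by positivity, ?_⟩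
    intro x
    by_cases h1 : G.degree x ≤ K
    · have : Real.log (G.degree x) ≤ Real.log K := hlogmono _ _ h1 (by omega)
      have h2 : (0:ℝ) ≤ δ * (G.dist o x) := by positivity
      have h3 : (0:ℝ) ≤ δ * R1 := by positivity
      have := Real.exp_pos cδ
      linarith
    · push_neg at h1
      have hdx : nstar < G.degree x := by omega
      have hxne : x ≠ x₁ := by
        intro h; rw [h] at h1; omega
      have hmax : max (G.degree x : ℝ) (G.degree x₁ : ℝ) = (G.degree x : ℝ) := by
        rw [max_eq_left]; exact_mod_cast (le_of_lt h1)
      have hrep' := hrep x x₁ hxne hdx hx₁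
      rw [hmax] at hrep'
      have htri : (G.dist x x₁ : ℝ) ≤ (G.dist o x : ℝ) + R1 := by
        have h := hconn.dist_triangle (u := x) (v := o) (w := x₁)
        have hcomm : G.dist x o = G.dist o x := SimpleGraph.dist_comm
        rw [hcomm] at h
        exact_mod_cast h
      have hkey : υ * Real.log (G.degree x) * Real.log (Real.log (G.degree x)) ^ (1+ε)
          ≤ (G.dist o x : ℝ) + R1 := le_trans hrep' htri
      set L := Real.log (G.degree x) with hL
      set LL := Real.log L with hLL
      have hdeg4 : (4:ℝ) ≤ (G.degree x : ℝ) := by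
        have : 4 ≤ G.degree x := by omega
        exact_mod_cast this
      have hLpos : 1 < L := one_lt_log_of_four_le hdeg4
      have hLLpos : 0 < LL := log_log_pos_of_four_le hdeg4
      by_cases h2 : (1:ℝ)/(υ*δ) ≤ LL ^ (1+ε)
      · have hmul : υ * (1/(υ*δ)) ≤ υ * LL ^ (1+ε) := mul_le_mul_of_nonneg_left h2 hυ.le
        have heq : υ * (1/(υ*δ)) = 1/δ := by field_simp
        have h3 : L * (1/δ) ≤ L * (υ * LL ^ (1+ε)) := by
          apply mul_le_mul_of_nonneg_left _ (by linarith : (0:ℝ) ≤ L)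
          linarith
        have h4 : L * (υ * LL ^ (1+ε)) ≤ (G.dist o x : ℝ) + R1 := by
          calc L * (υ * LL ^ (1+ε)) = υ * L * LL ^ (1+ε) := by ring
            _ ≤ _ := hkey
        have h5 : L ≤ δ * ((G.dist o x : ℝ) + R1) := by
          have h6 : L * (1/δ) ≤ (G.dist o x : ℝ) + R1 := le_trans h3 h4
          rw [mul_one_div, div_le_iff₀ hδ] at h6
          linarith [h6]
        have := Real.exp_pos cδ
        have hlogK : 0 ≤ Real.log K := Real.log_natCast_nonneg K
        nlinarith
      · push_neg at h2
        have h3 : LL < cδ := by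
          have hb : (0:ℝ) ≤ LL ^ (1+ε) := Real.rpow_nonneg hLLpos.le _
          have hmonoR : (LL ^ (1+ε)) ^ ((1:ℝ)/(1+ε)) < (1/(υ*δ)) ^ ((1:ℝ)/(1+ε)) :=
            Real.rpow_lt_rpow hb h2 (by positivity)
          have ha : (LL ^ (1+ε)) ^ ((1:ℝ)/(1+ε)) = LL := by
            rw [← Real.rpow_mul hLLpos.le]
            rw [show (1+ε) * ((1:ℝ)/(1+ε)) = 1 by field_simp]
            exact Real.rpow_one LL
          rw [hcδ, ← ha]
          exact hmonoR
        have h4 : L < Real.exp cδ := by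
          rw [← Real.exp_log (lt_trans one_pos hLpos : (0:ℝ) < L)]
          exact Real.exp_lt_exp.mpr h3
        have h5 : (0:ℝ) ≤ δ * (G.dist o x) := by positivity
        have h6 : (0:ℝ) ≤ δ * R1 := by positivity
        have hlogK : 0 ≤ Real.log K := Real.log_natCast_nonneg K
        linarith
  · push_neg at hH
    refine ⟨Real.log nstar, Real.log_natCast_nonneg _, ?_⟩
    intro x
    have : Real.log (G.degree x) ≤ Real.log nstar := hlogmono _ _ (hH x) (by omega)
    have h2 : (0:ℝ) ≤ δ * (G.dist o x) := by positivity
    linarith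

-- L7: pathwise product bound along geodesics
lemma path_prod_bound {V : Type} (G : SimpleGraph V) [inst : ∀ v : V, Fintype (G.neighborSet v)]
    (hconn : G.Connected) (nstar : ℕ) (hn : 2 < nstar) (υ ε : ℝ) (hυ : 0 < υ) (hε : 0 < ε)
    (hrep : RepulsiveGraph G nstar (phiRep υ ε)) (o : V)
    (m₀ : ℕ) (hm₀2 : 2 ≤ m₀) (hm₀ : nstar < 2^m₀)
    (C₃ : ℝ) (hC₃0 : 0 ≤ C₃)
    (hC₃ : ∀ M : ℕ, ∑ m ∈ Finset.Ico m₀ M,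
        1/(υ * ((m:ℝ)*Real.log 2) * (Real.log ((m:ℝ)*Real.log 2))^(1+ε)) ≤ C₃)
    (δ C_A : ℝ) (hδ : 0 < δ) (hCA : 0 ≤ C_A)
    (hdeg : ∀ x : V, Real.log (G.degree x) ≤ δ * (G.dist o x) + C_A)
    (r : ℕ) (q : ℕ → V)
    (hadj : ∀ k, k < r → G.Adj (q k) (q (k+1)))
    (hdist : ∀ k, k ≤ r → G.dist o (q k) = k) :
    ∏ k ∈ Finset.range r, (G.degree (q k) : ℝ) ≤
      Real.exp ((Real.log nstar + (m₀:ℝ) * Real.log 2 + C₃ * Real.log 2 + δ) * r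
        + (C_A + Real.log 2)) := by
  classical
  have hlog2 : (0:ℝ) < Real.log 2 := Real.log_pos (by norm_num)
  set d : ℕ → ℕ := fun k => G.degree (q k) with hd
  have hd1 : ∀ k, k < r → 1 ≤ d k := by
    intro k hk
    have : 0 < G.degree (q k) := by
      rw [← SimpleGraph.card_neighborFinset_eq_degree]
      refine Finset.card_pos.mpr ⟨q (k+1), ?_⟩
      rw [SimpleGraph.mem_neighborFinset]
      exact hadj k hk
    simp only [hd]
    omega
  set Kp : Finset ℕ := (Finset.range r).filter (fun k => nstar < d k) with hKp
  -- split product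
  have hsplit : ∏ k ∈ Finset.range r, (d k : ℝ)
      = (∏ k ∈ Kp, (d k : ℝ)) * ∏ k ∈ (Finset.range r).filter (fun k => ¬ nstar < d k), (d k : ℝ) := by
    rw [hKp, Finset.prod_filter_mul_prod_filter_not]
  -- low-degree part
  have hlow : ∏ k ∈ (Finset.range r).filter (fun k => ¬ nstar < d k), (d k : ℝ)
      ≤ Real.exp (Real.log nstar * r) := by
    calc ∏ k ∈ (Finset.range r).filter (fun k => ¬ nstar < d k), (d k : ℝ)
        ≤ ∏ k ∈ (Finset.range r).filter (fun k => ¬ nstar < d k), (nstar : ℝ) := by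
          apply Finset.prod_le_prod (fun k _ => by positivity)
          intro k hk
          have := (Finset.mem_filter.mp hk).2
          push_neg at this
          exact_mod_cast this
      _ = (nstar : ℝ) ^ ((Finset.range r).filter (fun k => ¬ nstar < d k)).card := by
          rw [Finset.prod_const]
      _ ≤ (nstar : ℝ) ^ r := by
          apply pow_le_pow_right₀ (by exact_mod_cast Nat.one_le_iff_ne_zero.mpr (by omega))
          exact le_trans (Finset.card_filter_le _ _) (by simp)
      _ = Real.exp (Real.log nstar * r) := by
          rw [mul_comm, Real.exp_nat_mul, Real.exp_log (by exact_mod_cast (by omega : 0 < nstar))]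
  -- high-degree part
  set e : ℕ → ℕ := fun k => Nat.log 2 (d k) + 1 with he
  have hKpsub : Kp ⊆ Finset.range r := Finset.filter_subset _ _
  have hdKp : ∀ k ∈ Kp, nstar < d k := fun k hk => (Finset.mem_filter.mp hk).2
  have hdKp4 : ∀ k ∈ Kp, (4:ℝ) ≤ (d k : ℝ) := by
    intro k hk
    have h := hdKp k hk
    have h2 : 4 ≤ d k := by omega
    exact_mod_cast h2
  have hhigh1 : ∏ k ∈ Kp, (d k : ℝ) ≤ (2:ℝ) ^ (∑ k ∈ Kp, e k) := by
    calc ∏ k ∈ Kp, (d k : ℝ) ≤ ∏ k ∈ Kp, (2:ℝ) ^ (e k) := by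
          apply Finset.prod_le_prod (fun k _ => by positivity)
          intro k hk
          have h := Nat.lt_pow_succ_log_self (by norm_num : 1 < 2) (d k)
          have : (d k : ℝ) ≤ ((2 ^ (Nat.log 2 (d k) + 1) : ℕ) : ℝ) := by exact_mod_cast h.le
          simpa [he] using this
      _ = (2:ℝ) ^ (∑ k ∈ Kp, e k) := Finset.prod_pow_eq_pow_sum _ _ _
  set E : ℕ := Kp.sup e with hE
  have heE : ∀ k ∈ Kp, e k ≤ E := fun k hk => Finset.le_sup hk
  have hlayer := layercake Kp e E heE
  -- identify count sets
  have hcnt_eq : ∀ m : ℕ, Kp.filter (fun k => m < e k) = Kp.filter (fun k => 2^m ≤ d k) := by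
    intro m
    apply Finset.filter_congr
    intro k hk
    have hdk : d k ≠ 0 := by have := hdKp k hk; omega
    simp only [he, eq_iff_iff]
    constructor
    · intro h
      exact (Nat.le_log_iff_pow_le (by norm_num) hdk).mp (by omega)
    · intro h
      have := (Nat.le_log_iff_pow_le (by norm_num) hdk).mpr h
      omega
  -- packing bound for m ≥ m₀
  have hpack : ∀ m : ℕ, m₀ ≤ m →
      ((Kp.filter (fun k => 2^m ≤ d k)).card : ℝ) ≤ (r:ℝ) / phiRep υ ε ((2:ℝ)^m) + 1 := by
    intro m hm
    have h2m4 : (4:ℝ) ≤ (2:ℝ)^m := by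
      calc (4:ℝ) = 2^2 := by norm_num
        _ ≤ 2^m := by
            apply pow_le_pow_right₀ (by norm_num)
            omega
    have hφpos : 0 < phiRep υ ε ((2:ℝ)^m) := phiRep_pos υ ε hυ hε h2m4
    apply packing _ r _ hφpos (le_trans (Finset.filter_subset _ _) hKpsub)
    intro k hk l hl hkl
    have hk' := Finset.mem_filter.mp hk
    have hl' := Finset.mem_filter.mp hl
    have hkKp := hk'.1; have hlKp := hl'.1
    have hkr : k < r := Finset.mem_range.mp (hKpsub hkKp)
    have hlr : l < r := Finset.mem_range.mp (hKpsub hlKp)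
    have hne : q k ≠ q l := by
      intro hqe
      have h1 := hdist k hkr.le
      have h2 := hdist l hlr.le
      rw [hqe] at h1
      omega
    have hrep' := hrep (q k) (q l) hne (hdKp k hkKp) (hdKp l hlKp)
    -- distance upper bound
    have hdub : (G.dist (q k) (q l) : ℝ) ≤ |(k:ℝ) - (l:ℝ)| := by
      rcases le_total k l with h | h
      · have := chain_dist G hconn q r hadj k l h hlr.le
        have habs : |(k:ℝ) - (l:ℝ)| = (l:ℝ) - k := by
          rw [abs_sub_comm, abs_of_nonneg (by
            have : (k:ℝ) ≤ l := by exact_mod_cast h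
            linarith)]
        rw [habs]
        have : ((l - k : ℕ) : ℝ) = (l:ℝ) - k := by
          push_cast [Nat.cast_sub h]
          ring
        rw [← this]
        exact_mod_cast chain_dist G hconn q r hadj k l h hlr.le
      · have habs : |(k:ℝ) - (l:ℝ)| = (k:ℝ) - l := by
          rw [abs_of_nonneg (by
            have : (l:ℝ) ≤ k := by exact_mod_cast h
            linarith)]
        rw [habs]
        have : ((k - l : ℕ) : ℝ) = (k:ℝ) - l := by
          push_cast [Nat.cast_sub h]
          ring
        rw [← this, SimpleGraph.dist_comm]
        exact_mod_cast chain_dist G hconn q r hadj l k h hkr.le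
    -- φ(2^m) ≤ φ(max)
    have hmax4 : ((2:ℝ)^m) ≤ max (d k : ℝ) (d l : ℝ) := by
      have h1 : ((2^m : ℕ) : ℝ) ≤ (d k : ℝ) := by exact_mod_cast hk'.2
      have : ((2^m : ℕ) : ℝ) = (2:ℝ)^m := by push_cast; ring
      rw [← this]
      exact le_trans h1 (le_max_left _ _)
    have hφmono : phiRep υ ε ((2:ℝ)^m) ≤ phiRep υ ε (max (d k : ℝ) (d l : ℝ)) :=
      phiRep_mono υ ε hυ hε h2m4 hmax4
    calc phiRep υ ε ((2:ℝ)^m) ≤ phiRep υ ε (max (d k : ℝ) (d l : ℝ)) := hφmono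
      _ ≤ (G.dist (q k) (q l) : ℝ) := hrep'
      _ ≤ |(k:ℝ) - (l:ℝ)| := hdub
  -- crude bound for any m
  have hcrude : ∀ m : ℕ, ((Kp.filter (fun k => m < e k)).card : ℝ) ≤ r := by
    intro m
    have : (Kp.filter (fun k => m < e k)).card ≤ r := by
      calc (Kp.filter (fun k => m < e k)).card ≤ Kp.card := Finset.card_filter_le _ _
        _ ≤ (Finset.range r).card := Finset.card_le_card hKpsub
        _ = r := Finset.card_range r
    exact_mod_cast this
  -- E bound
  have hEbound : (E:ℝ) * Real.log 2 ≤ δ * r + C_A + Real.log 2 := by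
    rcases Finset.eq_empty_or_nonempty Kp with hemp | hne
    · rw [hE, hemp]
      simp only [Finset.sup_empty, bot_eq_zero, Nat.cast_zero, zero_mul]
      positivity
    · obtain ⟨k', hk', hek'⟩ := Finset.exists_mem_eq_sup Kp hne e
      have hkr : k' < r := Finset.mem_range.mp (hKpsub hk')
      have hdk0 : d k' ≠ 0 := by have := hdKp k' hk'; omega
      have h1 : ((Nat.log 2 (d k') : ℝ)) * Real.log 2 ≤ Real.log (d k') := by
        rw [← Real.log_pow]
        apply Real.log_le_log (by positivity)
        exact_mod_cast Nat.pow_log_le_self 2 hdk0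
      have h2 : Real.log (d k') ≤ δ * (G.dist o (q k')) + C_A := hdeg (q k')
      rw [hdist k' hkr.le] at h2
      have h3 : δ * (k':ℝ) ≤ δ * r := by
        apply mul_le_mul_of_nonneg_left _ hδ.le
        exact_mod_cast hkr.le
      rw [hE, hek']
      simp only [he]
      push_cast
      nlinarith
  -- sum of e bound
  have hesum : ((∑ k ∈ Kp, e k : ℕ) : ℝ) ≤ (m₀:ℝ) * r + (C₃ * r + (δ * r + C_A + Real.log 2) / Real.log 2) := by
    rw [hlayer]
    push_cast
    have hsplit2 : ∑ m ∈ Finset.range E, ((Kp.filter (fun k => m < e k)).card : ℝ)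
        = ∑ m ∈ (Finset.range E).filter (fun m => m < m₀), ((Kp.filter (fun k => m < e k)).card : ℝ)
          + ∑ m ∈ (Finset.range E).filter (fun m => ¬ m < m₀), ((Kp.filter (fun k => m < e k)).card : ℝ) := by
      rw [Finset.sum_filter_add_sum_filter_not]
    rw [hsplit2]
    have hb1 : ∑ m ∈ (Finset.range E).filter (fun m => m < m₀), ((Kp.filter (fun k => m < e k)).card : ℝ)
        ≤ (m₀:ℝ) * r := by
      calc ∑ m ∈ (Finset.range E).filter (fun m => m < m₀), ((Kp.filter (fun k => m < e k)).card : ℝ)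
          ≤ ∑ m ∈ (Finset.range E).filter (fun m => m < m₀), (r:ℝ) :=
            Finset.sum_le_sum (fun m _ => hcrude m)
        _ = ((Finset.range E).filter (fun m => m < m₀)).card * (r:ℝ) := by
            rw [Finset.sum_const, nsmul_eq_mul]
        _ ≤ (m₀:ℝ) * r := by
            apply mul_le_mul_of_nonneg_right _ (by positivity)
            have : ((Finset.range E).filter (fun m => m < m₀)).card ≤ m₀ := by
              calc ((Finset.range E).filter (fun m => m < m₀)).card
                  ≤ (Finset.range m₀).card := by
                    apply Finset.card_le_card
                    intro m hm
                    simp only [Finset.mem_filter, Finset.mem_range] at hm ⊢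
                    exact hm.2
                _ = m₀ := Finset.card_range m₀
            exact_mod_cast this
    have hIco : (Finset.range E).filter (fun m => ¬ m < m₀) = Finset.Ico m₀ E := by
      ext m
      simp only [Finset.mem_filter, Finset.mem_range, Finset.mem_Ico]
      omega
    have hb2 : ∑ m ∈ (Finset.range E).filter (fun m => ¬ m < m₀), ((Kp.filter (fun k => m < e k)).card : ℝ)
        ≤ C₃ * r + (δ * r + C_A + Real.log 2) / Real.log 2 := by
      rw [hIco]
      have hterm : ∀ m ∈ Finset.Ico m₀ E, ((Kp.filter (fun k => m < e k)).card : ℝ)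
          ≤ (r:ℝ) * (1/(υ * ((m:ℝ)*Real.log 2) * (Real.log ((m:ℝ)*Real.log 2))^(1+ε))) + 1 := by
        intro m hm
        have hm₀m := (Finset.mem_Ico.mp hm).1
        have hφeq : phiRep υ ε ((2:ℝ)^m)
            = υ * ((m:ℝ)*Real.log 2) * (Real.log ((m:ℝ)*Real.log 2))^(1+ε) := by
          unfold phiRep
          rw [Real.log_pow]
        rw [hcnt_eq m]
        have := hpack m hm₀m
        rw [hφeq] at this
        calc ((Kp.filter (fun k => 2^m ≤ d k)).card : ℝ)
            ≤ (r:ℝ) / (υ * ((m:ℝ)*Real.log 2) * (Real.log ((m:ℝ)*Real.log 2))^(1+ε)) + 1 := this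
          _ = (r:ℝ) * (1/(υ * ((m:ℝ)*Real.log 2) * (Real.log ((m:ℝ)*Real.log 2))^(1+ε))) + 1 := by
              rw [mul_one_div]
      calc ∑ m ∈ Finset.Ico m₀ E, ((Kp.filter (fun k => m < e k)).card : ℝ)
          ≤ ∑ m ∈ Finset.Ico m₀ E,
              ((r:ℝ) * (1/(υ * ((m:ℝ)*Real.log 2) * (Real.log ((m:ℝ)*Real.log 2))^(1+ε))) + 1) :=
            Finset.sum_le_sum hterm
        _ = (r:ℝ) * (∑ m ∈ Finset.Ico m₀ E,
              1/(υ * ((m:ℝ)*Real.log 2) * (Real.log ((m:ℝ)*Real.log 2))^(1+ε)))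
              + (Finset.Ico m₀ E).card := by
            rw [Finset.sum_add_distrib, Finset.sum_const, ← Finset.mul_sum, nsmul_eq_mul, mul_one]
        _ ≤ (r:ℝ) * C₃ + E := by
            apply add_le_add
            · exact mul_le_mul_of_nonneg_left (hC₃ E) (by positivity)
            · have : (Finset.Ico m₀ E).card ≤ E := by
                rw [Nat.card_Ico]
                omega
              exact_mod_cast this
        _ ≤ C₃ * r + (δ * r + C_A + Real.log 2) / Real.log 2 := by
            apply add_le_add (by linarith [mul_comm (r:ℝ) C₃] )
            rw [le_div_iff₀ hlog2]
            exact hEbound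
    linarith
  -- put it together
  have hfinal : ∏ k ∈ Finset.range r, (d k : ℝ) ≤
      Real.exp ((Real.log nstar + (m₀:ℝ) * Real.log 2 + C₃ * Real.log 2 + δ) * r
        + (C_A + Real.log 2)) := by
    rw [hsplit]
    have h2exp : (2:ℝ) ^ (∑ k ∈ Kp, e k) = Real.exp ((∑ k ∈ Kp, e k : ℕ) * Real.log 2) := by
      rw [Real.exp_nat_mul, Real.exp_log (by norm_num : (0:ℝ) < 2)]
    have hstep1 : (∏ k ∈ Kp, (d k : ℝ)) * (∏ k ∈ (Finset.range r).filter (fun k => ¬ nstar < d k), (d k : ℝ))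
        ≤ Real.exp ((∑ k ∈ Kp, e k : ℕ) * Real.log 2) * Real.exp (Real.log nstar * r) := by
      apply mul_le_mul (h2exp ▸ hhigh1) hlow
        (Finset.prod_nonneg (fun k _ => by positivity)) (by positivity)
    apply le_trans hstep1
    rw [← Real.exp_add]
    apply Real.exp_le_exp.mpr
    have hmul := mul_le_mul_of_nonneg_right hesum hlog2.le
    have hcancel : ((δ * r + C_A + Real.log 2) / Real.log 2) * Real.log 2
        = δ * r + C_A + Real.log 2 := by
      field_simp
    nlinarith [hmul, hcancel]
  simp only [hd] at hfinal
  exact hfinal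

theorem summability_main'
    (nstar : ℕ) (hn : 2 < nstar) (υ ε : ℝ) (hυ : 0 < υ) (hε : 0 < ε)
    (hφ1 : 1 < phiRep υ ε ((nstar : ℝ) + 1)) (θ : ℝ) (hθ : 0 < θ) :
    ∃ α₀ : ℝ, 0 ≤ α₀ ∧
      ∀ (V : Type) (_ : Countable V) (G : SimpleGraph V)
        (_ : ∀ v : V, Fintype (G.neighborSet v)),
        G.Connected → RepulsiveGraph G nstar (phiRep υ ε) →
        ∀ α : ℝ, α₀ < α → ∀ o : V,
          Summable fun x : V =>
            (∑ y ∈ G.neighborFinset x, ((G.degree x : ℝ) * (G.degree y : ℝ)) ^ θ) *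
              Real.exp (-α * (G.dist o x : ℝ)) := by
  classical
  obtain ⟨C₃, hC₃0, hC₃⟩ := sum_inv_phi_le υ ε hυ hε
  set m₀ : ℕ := Nat.log 2 nstar + 1 with hm₀def
  have hm₀2 : 2 ≤ m₀ := by
    have : 1 ≤ Nat.log 2 nstar := by
      apply Nat.le_log_of_pow_le (by norm_num)
      omega
    omega
  have hm₀pow : nstar < 2 ^ m₀ := Nat.lt_pow_succ_log_self (by norm_num) nstar
  have hlog2 : (0:ℝ) < Real.log 2 := Real.log_pos (by norm_num)
  set α₀ : ℝ := Real.log nstar + (m₀:ℝ) * Real.log 2 + C₃ * Real.log 2 with hα₀def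
  have hα₀0 : 0 ≤ α₀ := by
    have h1 : 0 ≤ Real.log nstar := Real.log_natCast_nonneg nstar
    have h2 : (0:ℝ) ≤ (m₀:ℝ) * Real.log 2 := by positivity
    have h3 : (0:ℝ) ≤ C₃ * Real.log 2 := by positivity
    linarith
  refine ⟨α₀, hα₀0, ?_⟩
  intro V _ G inst hconn hrep α hα o
  set δ : ℝ := (α - α₀)/(4*(1+θ)) with hδdef
  have hδ : 0 < δ := by
    apply div_pos (by linarith) (by linarith)
  obtain ⟨C_A, hCA0, hCA⟩ := degree_log_bound G hconn nstar hn υ ε hυ hε hrep o δ hδ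
  set β : ℝ := (α - α₀)/2 with hβdef
  have hβ : 0 < β := by
    rw [hβdef]
    apply div_pos <;> linarith
  set ρ : ℝ := Real.exp (-β) with hρdef
  have hρ0 : 0 ≤ ρ := (Real.exp_pos _).le
  have hρ1 : ρ < 1 := by
    rw [hρdef, Real.exp_lt_one_iff]
    linarith
  set K₀ : ℝ := Real.exp (C_A + Real.log 2 + θ*δ + (1+2*θ)*C_A) with hK₀def
  set c : ℝ := K₀ * (1 - ρ)⁻¹ with hcdef
  set f : V → ℝ := fun x =>
    (∑ y ∈ G.neighborFinset x, ((G.degree x : ℝ) * (G.degree y : ℝ)) ^ θ) *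
      Real.exp (-α * (G.dist o x : ℝ)) with hfdef
  have hf0 : ∀ x, 0 ≤ f x := by
    intro x
    apply mul_nonneg _ (Real.exp_pos _).le
    apply Finset.sum_nonneg
    intro y _
    positivity
  -- per-vertex bound
  have hfb : ∀ (x : V) (r : ℕ), G.dist o x = r →
      f x ≤ Real.exp ((1+2*θ)*δ*r + θ*δ + (1+2*θ)*C_A) * Real.exp (-α * r) := by
    intro x r hr
    rw [hfdef]
    simp only [hr]
    apply mul_le_mul_of_nonneg_right _ (Real.exp_pos _).le
    by_cases hdx : G.degree x = 0
    · have : G.neighborFinset x = ∅ := by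
        rw [← Finset.card_eq_zero, SimpleGraph.card_neighborFinset_eq_degree, hdx]
      rw [this]
      simp [Real.exp_pos _ |>.le]
    · have hdx1 : 1 ≤ G.degree x := by omega
      have hlogx : Real.log (G.degree x) ≤ δ * r + C_A := by
        have := hCA x
        rwa [hr] at this
      have hterm : ∀ y ∈ G.neighborFinset x,
          ((G.degree x : ℝ) * (G.degree y : ℝ)) ^ θ ≤ Real.exp (θ * (2*δ*r + δ + 2*C_A)) := by
        intro y hy
        have hadj : G.Adj x y := (SimpleGraph.mem_neighborFinset _ _ _).mp hy
        have hdy1 : 1 ≤ G.degree y := by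
          have : 0 < G.degree y := by
            rw [← SimpleGraph.card_neighborFinset_eq_degree]
            exact Finset.card_pos.mpr ⟨x, (SimpleGraph.mem_neighborFinset _ _ _).mpr hadj.symm⟩
          omega
        have hdisty : (G.dist o y : ℝ) ≤ (r:ℝ) + 1 := by
          have h1 := hconn.dist_triangle (u := o) (v := x) (w := y)
          have h2 : G.dist x y = 1 := SimpleGraph.dist_eq_one_iff_adj.mpr hadj
          rw [hr, h2] at h1
          exact_mod_cast h1
        have hlogy : Real.log (G.degree y) ≤ δ * ((r:ℝ)+1) + C_A := by
          have := hCA y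
          have h3 : δ * (G.dist o y : ℝ) ≤ δ * ((r:ℝ)+1) := by
            apply mul_le_mul_of_nonneg_left hdisty hδ.le
          linarith
        have hposx : (0:ℝ) < (G.degree x : ℝ) := by exact_mod_cast hdx1
        have hposy : (0:ℝ) < (G.degree y : ℝ) := by exact_mod_cast hdy1
        rw [Real.rpow_def_of_pos (by positivity)]
        apply Real.exp_le_exp.mpr
        rw [Real.log_mul hposx.ne' hposy.ne', mul_comm]
        calc θ * (Real.log (G.degree x) + Real.log (G.degree y))
            ≤ θ * ((δ * r + C_A) + (δ * ((r:ℝ)+1) + C_A)) := by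
              apply mul_le_mul_of_nonneg_left _ hθ.le
              linarith
          _ = θ * (2*δ*r + δ + 2*C_A) := by ring
      calc ∑ y ∈ G.neighborFinset x, ((G.degree x : ℝ) * (G.degree y : ℝ)) ^ θ
          ≤ ∑ y ∈ G.neighborFinset x, Real.exp (θ * (2*δ*r + δ + 2*C_A)) :=
            Finset.sum_le_sum hterm
        _ = (G.degree x : ℝ) * Real.exp (θ * (2*δ*r + δ + 2*C_A)) := by
            rw [Finset.sum_const, SimpleGraph.card_neighborFinset_eq_degree, nsmul_eq_mul]
        _ ≤ Real.exp (δ*r + C_A) * Real.exp (θ * (2*δ*r + δ + 2*C_A)) := by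
            apply mul_le_mul_of_nonneg_right _ (Real.exp_pos _).le
            calc (G.degree x : ℝ) = Real.exp (Real.log (G.degree x)) := by
                  rw [Real.exp_log (by exact_mod_cast hdx1 : (0:ℝ) < (G.degree x:ℝ))]
              _ ≤ Real.exp (δ*r + C_A) := Real.exp_le_exp.mpr hlogx
        _ = Real.exp ((1+2*θ)*δ*r + θ*δ + (1+2*θ)*C_A) := by
            rw [← Real.exp_add]
            congr 1
            ring
  -- fiber cardinality bound
  have hcard : ∀ (u : Finset V) (r : ℕ), (∀ x ∈ u, G.dist o x = r) →
      ((u.card : ℝ)) ≤ Real.exp ((α₀ + δ) * r + (C_A + Real.log 2)) := by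
    intro u r hu
    have := countG G o r u (fun _ => (1:ℝ)) (Real.exp ((α₀ + δ) * r + (C_A + Real.log 2)))
      (Real.exp_pos _).le (fun _ _ => one_pos.le) ?_
    · simpa using this
    · intro x hx
      obtain ⟨q, hq0, hqx, hqadj, hqdist⟩ := exists_geodesic G hconn o x
      rw [hu x hx] at hqx hqadj hqdist
      refine ⟨q, hq0, hqx, hqadj, ?_⟩
      rw [mul_one]
      have := path_prod_bound G hconn nstar hn υ ε hυ hε hrep o m₀ hm₀2 hm₀pow C₃ hC₃0
        (fun M => hC₃ m₀ M hm₀2) δ C_A hδ hCA0 hCA r q hqadj hqdist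
      calc ∏ k ∈ Finset.range r, (G.degree (q k) : ℝ)
          ≤ Real.exp ((Real.log nstar + (m₀:ℝ) * Real.log 2 + C₃ * Real.log 2 + δ) * r
              + (C_A + Real.log 2)) := this
        _ = Real.exp ((α₀ + δ) * r + (C_A + Real.log 2)) := by rw [hα₀def]
  -- fiber sum bound
  have hfiber : ∀ (u : Finset V) (r : ℕ),
      ∑ x ∈ u.filter (fun x => G.dist o x = r), f x ≤ K₀ * ρ ^ r := by
    intro u r
    set T := u.filter (fun x => G.dist o x = r) with hT
    have hTd : ∀ x ∈ T, G.dist o x = r := fun x hx => (Finset.mem_filter.mp hx).2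
    have h1 : ∑ x ∈ T, f x ≤ T.card * (Real.exp ((1+2*θ)*δ*r + θ*δ + (1+2*θ)*C_A) * Real.exp (-α * r)) := by
      calc ∑ x ∈ T, f x
          ≤ ∑ x ∈ T, Real.exp ((1+2*θ)*δ*r + θ*δ + (1+2*θ)*C_A) * Real.exp (-α * r) :=
            Finset.sum_le_sum (fun x hx => hfb x r (hTd x hx))
        _ = T.card * (Real.exp ((1+2*θ)*δ*r + θ*δ + (1+2*θ)*C_A) * Real.exp (-α * r)) := by
            rw [Finset.sum_const, nsmul_eq_mul]
    have h2 : (T.card : ℝ) ≤ Real.exp ((α₀ + δ) * r + (C_A + Real.log 2)) := hcard T r hTd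
    have h3 : ∑ x ∈ T, f x ≤ Real.exp ((α₀ + δ) * r + (C_A + Real.log 2)) *
        (Real.exp ((1+2*θ)*δ*r + θ*δ + (1+2*θ)*C_A) * Real.exp (-α * r)) := by
      apply le_trans h1
      apply mul_le_mul_of_nonneg_right h2 (by positivity)
    apply le_trans h3
    have heq : Real.exp ((α₀ + δ) * r + (C_A + Real.log 2)) *
        (Real.exp ((1+2*θ)*δ*r + θ*δ + (1+2*θ)*C_A) * Real.exp (-α * r)) = K₀ * ρ ^ r := by
      rw [hK₀def, hρdef, ← Real.exp_nat_mul, ← Real.exp_add, ← Real.exp_add, ← Real.exp_add]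
      congr 1
      rw [hδdef, hβdef]
      field_simp
      ring
    rw [heq]
  -- conclude summability
  apply summable_of_sum_le hf0
  intro u
  set R : ℕ := u.sup (G.dist o) with hR
  have hmaps : ∀ x ∈ u, G.dist o x ∈ Finset.range (R+1) := by
    intro x hx
    rw [Finset.mem_range]
    have : G.dist o x ≤ R := Finset.le_sup (f := G.dist o) hx
    omega
  have hdecomp : ∑ r ∈ Finset.range (R+1), ∑ x ∈ u.filter (fun x => G.dist o x = r), f x
      = ∑ x ∈ u, f x := Finset.sum_fiberwise_of_maps_to hmaps f
  rw [← hdecomp]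
  calc ∑ r ∈ Finset.range (R+1), ∑ x ∈ u.filter (fun x => G.dist o x = r), f x
      ≤ ∑ r ∈ Finset.range (R+1), K₀ * ρ ^ r :=
        Finset.sum_le_sum (fun r _ => hfiber u r)
    _ = K₀ * ∑ r ∈ Finset.range (R+1), ρ ^ r := by rw [Finset.mul_sum]
    _ ≤ K₀ * (1 - ρ)⁻¹ := by
        apply mul_le_mul_of_nonneg_left _ (Real.exp_pos _).le
        have hsummable : Summable (fun n : ℕ => ρ ^ n) := summable_geometric_of_lt_one hρ0 hρ1
        calc ∑ r ∈ Finset.range (R+1), ρ ^ r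
            ≤ ∑' n : ℕ, ρ ^ n := Summable.sum_le_tsum _ (fun n _ => by positivity) hsummable
          _ = (1 - ρ)⁻¹ := tsum_geometric_of_lt_one hρ0 hρ1
    _ = c := by rw [hcdef]


/-- **Theorem 5 (summability for repulsive graphs).** Let `n_* > 2`, `υ, ε > 0` and
`φ(b) = υ log b (log log b)^{1+ε}` with `φ(n_*+1) > 1`. Then for every `θ > 0` there is
`α₀ ≥ 0`, depending only on `θ, n_*, υ, ε`, such that for every graph `G ∈ 𝔾(n_*,φ)`,
every `α > α₀` and every root `o`, one has `Θ(α,θ) < ∞`. -/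
theorem summability_for_repulsive_graphs
    (nstar : ℕ) (hn : 2 < nstar) (υ ε : ℝ) (hυ : 0 < υ) (hε : 0 < ε)
    (hφ1 : 1 < phiRep υ ε ((nstar : ℝ) + 1)) (θ : ℝ) (hθ : 0 < θ) :
    ∃ α₀ : ℝ, 0 ≤ α₀ ∧
      ∀ (V : Type) (_ : Countable V) (G : SimpleGraph V)
        (_ : ∀ v : V, Fintype (G.neighborSet v)),
        G.Connected → RepulsiveGraph G nstar (phiRep υ ε) →
        ∀ α : ℝ, α₀ < α → ∀ o : V,
          Summable fun x : V =>
            (∑ y ∈ G.neighborFinset x, ((G.degree x : ℝ) * (G.degree y : ℝ)) ^ θ) *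
              Real.exp (-α * (G.dist o x : ℝ)) := by
  exact summability_main' nstar hn υ ε hυ hε hφ1 θ hθ
end
end

section
/- Lemma 3 (reduction of Θ to a single-vertex sum). Let G ∈ 𝔾(n_*, φ) with φ(n_* + 1) > 1. Then for every α > 0 and θ > 0, Θ(α,θ) ≤ n_*^θ (e^α + 1) T_o(α,θ), where T_o(α,θ) = Σ_{y∈V} n(y)^{1+θ} exp(−α ρ(o,y)) (the inequality being understood in [0, ∞]). -/
open Real

noncomputable section

/-- **Lemma 3 (reduction of `Θ` to a single-vertex sum).** If `G ∈ 𝔾(n_*,φ)` with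
`φ(n_*+1) > 1`, then for all `α, θ > 0`, in `[0,∞]`:
`Θ(α,θ) ≤ n_*^θ (e^α + 1) T_o(α,θ)`, where
`T_o(α,θ) = Σ_y n(y)^{1+θ} exp(-α ρ(o,y))`. -/
theorem theta_le_single_vertex_sum
    {V : Type} [Countable V] (G : SimpleGraph V) [∀ v : V, Fintype (G.neighborSet v)]
    (hconn : G.Connected) (nstar : ℕ) (hn : 2 < nstar)
    (φ : ℝ → ℝ) (hmono : StrictMonoOn φ (Set.Ioi (nstar : ℝ)))
    (hφ1 : 1 < φ ((nstar : ℝ) + 1))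
    (hrep : RepulsiveGraph G nstar φ)
    (o : V) (α θ : ℝ) (hα : 0 < α) (hθ : 0 < θ) :
    (∑' x : V, ENNReal.ofReal
        ((∑ y ∈ G.neighborFinset x, ((G.degree x : ℝ) * (G.degree y : ℝ)) ^ θ) *
          Real.exp (-α * (G.dist o x : ℝ)))) ≤
      ENNReal.ofReal ((nstar : ℝ) ^ θ * (Real.exp α + 1)) *
        ∑' y : V, ENNReal.ofReal
          ((G.degree y : ℝ) ^ (1 + θ) * Real.exp (-α * (G.dist o y : ℝ))) := by
  classical
  set e : V → ℝ := fun v => Real.exp (-α * (G.dist o v : ℝ)) with he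
  set d : V → ℝ := fun v => (G.degree v : ℝ) with hd
  have hd0 : ∀ v, 0 ≤ d v := fun v => Nat.cast_nonneg _
  have he0 : ∀ v, 0 ≤ e v := fun v => (Real.exp_pos _).le
  -- degrees of adjacent vertices: one is ≤ nstar
  have hdeg_min : ∀ x y : V, G.Adj x y → G.degree x ≤ nstar ∨ G.degree y ≤ nstar := by
    intro x y hxy
    by_contra h
    push_neg at h
    obtain ⟨hx, hy⟩ := h
    have hdist : G.dist x y = 1 := SimpleGraph.dist_eq_one_iff_adj.mpr hxy
    have h1 := hrep x y hxy.ne hx hy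
    rw [hdist] at h1
    have hmax : (nstar : ℝ) + 1 ≤ max (G.degree x : ℝ) (G.degree y : ℝ) := by
      have : (nstar : ℝ) + 1 ≤ (G.degree x : ℝ) := by exact_mod_cast hx
      exact this.trans (le_max_left _ _)
    have hmem1 : ((nstar : ℝ) + 1) ∈ Set.Ioi (nstar : ℝ) := by simp
    have hmem2 : max (G.degree x : ℝ) (G.degree y : ℝ) ∈ Set.Ioi (nstar : ℝ) := by
      exact lt_of_lt_of_le (by linarith) hmax
    have := hmono.monotoneOn hmem1 hmem2 hmax
    push_cast at h1
    linarith
  -- pointwise bound on (d x * d y)^θ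
  have hpt : ∀ x y : V, G.Adj x y →
      (d x * d y) ^ θ ≤ (nstar : ℝ) ^ θ * (d x ^ θ + d y ^ θ) := by
    intro x y hxy
    have hns : (0:ℝ) ≤ (nstar : ℝ) := Nat.cast_nonneg _
    have hmul : (d x * d y) ^ θ = d x ^ θ * d y ^ θ :=
      Real.mul_rpow (hd0 x) (hd0 y)
    have hxθ : 0 ≤ d x ^ θ := Real.rpow_nonneg (hd0 x) θ
    have hyθ : 0 ≤ d y ^ θ := Real.rpow_nonneg (hd0 y) θ
    have hnθ : 0 ≤ (nstar : ℝ) ^ θ := Real.rpow_nonneg hns θ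
    rcases hdeg_min x y hxy with hle | hle
    · have h1 : d x ^ θ ≤ (nstar : ℝ) ^ θ :=
        Real.rpow_le_rpow (hd0 x) (by show ((G.degree _ : ℕ) : ℝ) ≤ (nstar : ℝ); exact_mod_cast hle) hθ.le
      calc (d x * d y) ^ θ = d x ^ θ * d y ^ θ := hmul
        _ ≤ (nstar : ℝ) ^ θ * d y ^ θ := mul_le_mul_of_nonneg_right h1 hyθ
        _ ≤ (nstar : ℝ) ^ θ * (d x ^ θ + d y ^ θ) := by nlinarith
    · have h1 : d y ^ θ ≤ (nstar : ℝ) ^ θ :=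
        Real.rpow_le_rpow (hd0 y) (by show ((G.degree _ : ℕ) : ℝ) ≤ (nstar : ℝ); exact_mod_cast hle) hθ.le
      calc (d x * d y) ^ θ = d x ^ θ * d y ^ θ := hmul
        _ ≤ d x ^ θ * (nstar : ℝ) ^ θ := mul_le_mul_of_nonneg_left h1 hxθ
        _ ≤ (nstar : ℝ) ^ θ * (d x ^ θ + d y ^ θ) := by nlinarith
  -- exponential bound for adjacent vertices
  have hexp : ∀ x y : V, G.Adj x y → e x ≤ Real.exp α * e y := by
    intro x y hxy
    have htri : G.dist o y ≤ G.dist o x + G.dist x y := hconn.dist_triangle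
    have hdist : G.dist x y = 1 := SimpleGraph.dist_eq_one_iff_adj.mpr hxy
    rw [hdist] at htri
    have hcast : (G.dist o y : ℝ) ≤ (G.dist o x : ℝ) + 1 := by exact_mod_cast htri
    rw [he, ← Real.exp_add]
    exact Real.exp_le_exp.mpr (by nlinarith)
  -- abbreviations in ENNReal
  set u : V → ENNReal := fun v => ENNReal.ofReal (d v ^ θ * e v) with hu
  set T : ENNReal := ∑' y : V, ENNReal.ofReal (d y ^ (1 + θ) * e y) with hT
  have hdegu : ∀ v : V, (G.degree v : ENNReal) * u v
      = ENNReal.ofReal (d v ^ (1 + θ) * e v) := by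
    intro v
    rw [hu]
    rw [show ((G.degree v : ℕ) : ENNReal) = ENNReal.ofReal (d v) by
      rw [hd]; simp [ENNReal.ofReal_natCast]]
    rw [← ENNReal.ofReal_mul (hd0 v)]
    congr 1
    rw [Real.rpow_add' (hd0 v) (by positivity), Real.rpow_one]
    ring
  -- Step 1: rewrite LHS as double sum
  have step1 : ∀ x : V, ENNReal.ofReal
      ((∑ y ∈ G.neighborFinset x, (d x * d y) ^ θ) * e x)
      = ∑ y ∈ G.neighborFinset x, ENNReal.ofReal ((d x * d y) ^ θ * e x) := by
    intro x
    rw [Finset.sum_mul, ENNReal.ofReal_sum_of_nonneg]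
    intro y _
    exact mul_nonneg (Real.rpow_nonneg (mul_nonneg (hd0 x) (hd0 y)) θ) (he0 x)
  -- pointwise bound on each summand
  set c1 : ENNReal := ENNReal.ofReal ((nstar : ℝ) ^ θ) with hc1
  set c2 : ENNReal := c1 * ENNReal.ofReal (Real.exp α) with hc2
  have step2 : ∀ x y : V, G.Adj x y →
      ENNReal.ofReal ((d x * d y) ^ θ * e x) ≤ c1 * u x + c2 * u y := by
    intro x y hxy
    have hb : (d x * d y) ^ θ * e x
        ≤ (nstar : ℝ) ^ θ * (d x ^ θ * e x) + (nstar : ℝ) ^ θ * (Real.exp α * (d y ^ θ * e y)) := by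
      have h1 : (d x * d y) ^ θ * e x ≤ ((nstar : ℝ) ^ θ * (d x ^ θ + d y ^ θ)) * e x :=
        mul_le_mul_of_nonneg_right (hpt x y hxy) (he0 x)
      have h2 : d y ^ θ * e x ≤ d y ^ θ * (Real.exp α * e y) :=
        mul_le_mul_of_nonneg_left (hexp x y hxy) (Real.rpow_nonneg (hd0 y) θ)
      have hnθ : 0 ≤ (nstar : ℝ) ^ θ := Real.rpow_nonneg (Nat.cast_nonneg _) θ
      nlinarith [Real.rpow_nonneg (hd0 x) θ, he0 x]
    calc ENNReal.ofReal ((d x * d y) ^ θ * e x)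
        ≤ ENNReal.ofReal ((nstar : ℝ) ^ θ * (d x ^ θ * e x)
            + (nstar : ℝ) ^ θ * (Real.exp α * (d y ^ θ * e y))) := ENNReal.ofReal_le_ofReal hb
      _ ≤ ENNReal.ofReal ((nstar : ℝ) ^ θ * (d x ^ θ * e x))
            + ENNReal.ofReal ((nstar : ℝ) ^ θ * (Real.exp α * (d y ^ θ * e y))) :=
          ENNReal.ofReal_add_le
      _ = c1 * u x + c2 * u y := by
          have hnθ : (0:ℝ) ≤ (nstar : ℝ) ^ θ := Real.rpow_nonneg (Nat.cast_nonneg _) θ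
          have e1 : ENNReal.ofReal ((nstar : ℝ) ^ θ * (d x ^ θ * e x)) = c1 * u x := by
            rw [hc1, hu, ENNReal.ofReal_mul hnθ]
          have e2 : ENNReal.ofReal ((nstar : ℝ) ^ θ * (Real.exp α * (d y ^ θ * e y)))
              = c2 * u y := by
            rw [hc2, hc1, hu, ENNReal.ofReal_mul hnθ,
              ENNReal.ofReal_mul (Real.exp_pos α).le, mul_assoc]
          rw [e1, e2]
  -- swap lemma
  have hswap : (∑' x : V, ∑ y ∈ G.neighborFinset x, u y)
      = ∑' y : V, (G.degree y : ENNReal) * u y := by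
    have h1 : ∀ x : V, (∑ y ∈ G.neighborFinset x, u y)
        = ∑' y : V, (if G.Adj x y then u y else 0) := by
      intro x
      rw [tsum_eq_sum (s := G.neighborFinset x)]
      · apply Finset.sum_congr rfl
        intro y hy
        rw [if_pos (by rwa [← SimpleGraph.mem_neighborFinset])]
      · intro y hy
        rw [if_neg (by rwa [← SimpleGraph.mem_neighborFinset])]
    have h2 : ∀ y : V, (∑' x : V, (if G.Adj x y then u y else 0))
        = (G.degree y : ENNReal) * u y := by
      intro y
      rw [tsum_eq_sum (s := G.neighborFinset y)]
      · rw [Finset.sum_congr rfl (fun x hx => if_pos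
          (G.adj_symm ((SimpleGraph.mem_neighborFinset _ _ _).mp hx)))]
        rw [Finset.sum_const, SimpleGraph.card_neighborFinset_eq_degree, nsmul_eq_mul]
      · intro x hx
        rw [if_neg (fun hadj => hx ((SimpleGraph.mem_neighborFinset _ _ _).mpr hadj.symm))]
    calc (∑' x : V, ∑ y ∈ G.neighborFinset x, u y)
        = ∑' x : V, ∑' y : V, (if G.Adj x y then u y else 0) := by
          exact tsum_congr h1
      _ = ∑' y : V, ∑' x : V, (if G.Adj x y then u y else 0) := ENNReal.tsum_comm
      _ = ∑' y : V, (G.degree y : ENNReal) * u y := tsum_congr h2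
  -- main chain
  have main : (∑' x : V, ENNReal.ofReal
      ((∑ y ∈ G.neighborFinset x, (d x * d y) ^ θ) * e x)) ≤ c1 * T + c2 * T := by
    calc (∑' x : V, ENNReal.ofReal ((∑ y ∈ G.neighborFinset x, (d x * d y) ^ θ) * e x))
        = ∑' x : V, ∑ y ∈ G.neighborFinset x, ENNReal.ofReal ((d x * d y) ^ θ * e x) :=
          tsum_congr step1
      _ ≤ ∑' x : V, ∑ y ∈ G.neighborFinset x, (c1 * u x + c2 * u y) := by
          apply ENNReal.tsum_le_tsum
          intro x
          apply Finset.sum_le_sum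
          intro y hy
          exact step2 x y ((SimpleGraph.mem_neighborFinset _ _ _).mp hy)
      _ = (∑' x : V, ∑ y ∈ G.neighborFinset x, c1 * u x)
            + ∑' x : V, ∑ y ∈ G.neighborFinset x, c2 * u y := by
          rw [← ENNReal.tsum_add]
          exact tsum_congr fun x => Finset.sum_add_distrib
      _ = (∑' x : V, c1 * ((G.degree x : ENNReal) * u x))
            + c2 * ∑' x : V, ∑ y ∈ G.neighborFinset x, u y := by
          congr 1
          · apply tsum_congr
            intro x
            rw [Finset.sum_const, SimpleGraph.card_neighborFinset_eq_degree, nsmul_eq_mul]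
            ring
          · rw [← ENNReal.tsum_mul_left]
            exact tsum_congr fun x => (Finset.mul_sum _ _ _).symm
      _ = c1 * T + c2 * T := by
          congr 1
          · rw [hT, ← ENNReal.tsum_mul_left]
            exact tsum_congr fun v => by rw [hdegu v]
          · rw [hswap, hT]
            exact congrArg _ (tsum_congr fun v => hdegu v)
  refine le_trans main ?_
  have hrw : ENNReal.ofReal ((nstar : ℝ) ^ θ * (Real.exp α + 1)) = c2 + c1 := by
    rw [hc2, hc1, ← ENNReal.ofReal_mul (Real.rpow_nonneg (Nat.cast_nonneg _) θ),
      ← ENNReal.ofReal_add (by positivity) (Real.rpow_nonneg (Nat.cast_nonneg _) θ)]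
    congr 1
    ring
  rw [hrw, add_mul]
  exact add_le_add (le_refl _) (le_refl _) |>.trans (by rw [add_comm])
end
end
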